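/- arXiv:2604.05713 — 7 statements merged into one kernel-verified Lean document; each statement's English description precedes it below -/
import Mathlib

section
/- Let M≥3 be an integer. Define words ω_1 = 0^{M-1}1 and ω_2 = 0^{M-2}11 in {0,1}^M, and let Ξ_M ⊂ {0,1}^ℕ be the set of all infinite concatenations a_0a_1a_2⋯ with each a_i ∈ {ω_1, ω_2}. Then Ξ_M ∩ σ^j(Ξ_M) = ∅ for every 1 ≤ j ≤ M−1, where σ is the shift map on {0,1}^ℕ. -/
/-- The one-sided shift map on `{0,1}^ℕ`. -/
def shift1 (x : ℕ → Fin 2) : ℕ → Fin 2 := fun n => x (n + 1)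

lemma shift1_iterate (x : ℕ → Fin 2) (j n : ℕ) : shift1^[j] x n = x (n + j) := by
  induction j generalizing x with
  | zero => rfl
  | succ j ih =>
    rw [Function.iterate_succ_apply, ih]
    rfl

/-- For `M ≥ 3`, the set `Ξ_M` of infinite concatenations of the blocks
`ω₁ = 0^{M-1}1` and `ω₂ = 0^{M-2}11` satisfies `Ξ_M ∩ σ^j(Ξ_M) = ∅` for `1 ≤ j ≤ M−1`. -/
theorem xi_disjoint_from_shifts (M : ℕ) (hM : 3 ≤ M)
    (ω₁ ω₂ : Fin M → Fin 2)
    (hω₁ : ∀ i : Fin M, ω₁ i = if (i : ℕ) = M - 1 then 1 else 0)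
    (hω₂ : ∀ i : Fin M, ω₂ i = if M - 2 ≤ (i : ℕ) then 1 else 0)
    (Ξ : Set (ℕ → Fin 2))
    (hΞ : Ξ = {x | ∀ k : ℕ,
      (fun i : Fin M => x (M * k + (i : ℕ))) = ω₁ ∨
      (fun i : Fin M => x (M * k + (i : ℕ))) = ω₂}) :
    ∀ j : ℕ, 1 ≤ j → j ≤ M - 1 → Ξ ∩ shift1^[j] '' Ξ = ∅ := by
  subst hΞ
  intro j hj1 hj2
  rw [Set.eq_empty_iff_forall_notMem]
  rintro y ⟨hy, x, hx, hxy⟩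
  have hfun : ∀ n, y n = x (n + j) := fun n => by
    rw [← hxy, shift1_iterate]
  have hMlt : M - 1 < M := by omega
  have hMlt2 : M - 1 - j < M := by omega
  -- x (M-1) = 1 : last letter of the first block of x is 1
  have hx1 : x (M - 1) = 1 := by
    rcases hx 0 with h | h
    · have := congrFun h ⟨M - 1, hMlt⟩
      rw [hω₁] at this
      simp only [Fin.val_mk] at this
      simpa using this
    · have := congrFun h ⟨M - 1, hMlt⟩
      rw [hω₂] at this
      simp only [Fin.val_mk] at this
      rw [if_pos (by omega)] at this
      simpa using this
  -- x M = 0 : first letter of the second block of x is 0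
  have hx0 : x M = 0 := by
    have h0 : (0 : ℕ) < M := by omega
    rcases hx 1 with h | h
    · have := congrFun h ⟨0, h0⟩
      rw [hω₁] at this
      simp only [Fin.val_mk] at this
      rw [if_neg (by omega)] at this
      simpa using this
    · have := congrFun h ⟨0, h0⟩
      rw [hω₂] at this
      simp only [Fin.val_mk] at this
      rw [if_neg (by omega)] at this
      simpa using this
  -- y (M-1-j) = 1
  have hy1 : y (M - 1 - j) = 1 := by
    rw [hfun]
    have hsum : M - 1 - j + j = M - 1 := by omega
    rw [hsum, hx1]
  rcases hy 0 with h | h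
  · have h1 := congrFun h ⟨M - 1 - j, hMlt2⟩
    rw [hω₁] at h1
    simp only [Fin.val_mk] at h1
    rw [if_neg (by omega)] at h1
    simp only [Nat.mul_zero, Nat.zero_add] at h1
    rw [hy1] at h1
    exact absurd h1 (by decide)
  · have h1 := congrFun h ⟨M - 1 - j, hMlt2⟩
    rw [hω₂] at h1
    simp only [Fin.val_mk] at h1
    simp only [Nat.mul_zero, Nat.zero_add] at h1
    rw [hy1] at h1
    have hj : j = 1 := by
      by_contra hc
      rw [if_neg (by omega)] at h1
      exact absurd h1 (by decide)
    have h2 := congrFun h ⟨M - 1, hMlt⟩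
    rw [hω₂] at h2
    simp only [Fin.val_mk] at h2
    rw [if_pos (by omega)] at h2
    simp only [Nat.mul_zero, Nat.zero_add] at h2
    rw [hfun, hj] at h2
    have hM1 : M - 1 + 1 = M := by omega
    rw [hM1, hx0] at h2
    exact absurd h2 (by decide)
end

section
/- Let (X,f) be a dynamical system satisfying the weak specification property with mistake function g. Then (X,f) satisfies the modified almost specification property with the same mistake function g, with k_g(ε) := min{m∈ℕ⁺ : g(n,ε) ≤ n−1 for all n≥m}. -/
open Filter

/-- The mistake dynamical ball `B_n(f; g; x, ε)`: points that `ε`-track the orbit of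
`x` on some nonempty set of at least `n - g` of the times `0,…,n-1`. -/
def mistakeBall {X : Type*} [MetricSpace X] (f : X → X) (n g : ℕ) (x : X) (ε : ℝ) :
    Set X :=
  {y | ∃ Λ : Finset (Fin n), Λ.Nonempty ∧ n - g ≤ Λ.card ∧
    ∀ i ∈ Λ, dist (f^[(i : ℕ)] y) (f^[(i : ℕ)] x) < ε}

/-- Weak specification with mistake function `g` implies the modified
almost specification property with the same mistake function `g` and
`k_g(ε) = min {m ∈ ℕ⁺ : g(n,ε) ≤ n − 1 for all n ≥ m}`. -/
theorem weak_specification_implies_modified_almost_specification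
    {X : Type*} [MetricSpace X] [CompactSpace X]
    (f : X → X) (hf : Continuous f)
    (ε₀ : ℝ) (hε₀ : 0 < ε₀) (g : ℕ → ℝ → ℕ)
    (hgmono : ∀ ε, 0 < ε → ε ≤ ε₀ → ∀ m n : ℕ, 0 < m → m ≤ n → g m ε ≤ g n ε)
    (hglim : ∀ ε, 0 < ε → ε ≤ ε₀ →
      Tendsto (fun n : ℕ => (g n ε : ℝ) / n) atTop (nhds 0))
    (hws : ∀ (k : ℕ) (x : Fin k → X) (a b : Fin k → ℕ) (ε : ℝ), 0 < ε → ε ≤ ε₀ →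
      (∀ i, a i ≤ b i) →
      (∀ (i : Fin k) (h : (i : ℕ) + 1 < k),
        b i < a ⟨(i : ℕ) + 1, h⟩ ∧
        g (b ⟨(i : ℕ) + 1, h⟩ - a ⟨(i : ℕ) + 1, h⟩ + 1) ε ≤ a ⟨(i : ℕ) + 1, h⟩ - b i) →
      ∃ z : X, ∀ (i : Fin k) (n : ℕ), a i ≤ n → n ≤ b i →
        dist (f^[n] z) (f^[n] (x i)) < ε)
    (kg : ℝ → ℕ)
    (hkg : ∀ ε : ℝ, kg ε = sInf {m : ℕ | 0 < m ∧ ∀ n ≥ m, g n ε ≤ n - 1}) :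
    ∀ (m : ℕ) (x : Fin m → X), (∀ j, x j ∈ ⋂ i : ℕ, Set.range f^[i]) →
      ∀ ε : ℝ, 0 < ε → ε ≤ ε₀ → ∀ n : ℕ, kg ε ≤ n →
        (⋂ j : Fin m,
          f^[(j : ℕ) * n] ⁻¹' mistakeBall f n (g n ε) (x j) ε).Nonempty := by
  intro m x hx ε hε hεε₀ n hn
  -- The set defining `kg ε` is nonempty
  have hSne : ∃ N : ℕ, 0 < N ∧ ∀ k ≥ N, g k ε ≤ k - 1 := by
    obtain ⟨N, hN⟩ := Filter.eventually_atTop.mp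
      ((hglim ε hε hεε₀).eventually_lt_const (show (0:ℝ) < 1/2 by norm_num))
    refine ⟨max N 2, lt_of_lt_of_le two_pos (le_max_right _ _), fun k hk => ?_⟩
    have hk2 : 2 ≤ k := le_trans (le_max_right _ _) hk
    have hkN : N ≤ k := le_trans (le_max_left _ _) hk
    have h1 : (g k ε : ℝ) / k < 1/2 := hN k hkN
    have hkpos : (0:ℝ) < (k:ℝ) := by exact_mod_cast lt_of_lt_of_le two_pos hk2
    have h2 : (g k ε : ℝ) < 1/2 * (k:ℝ) := (div_lt_iff₀ hkpos).mp h1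
    have h3 : (g k ε : ℝ) ≤ ((k - 1 : ℕ) : ℝ) := by
      have : ((k - 1 : ℕ) : ℝ) = (k:ℝ) - 1 := by
        push_cast [Nat.cast_sub (le_trans one_le_two hk2)]; ring
      rw [this]
      have : (2:ℝ) ≤ (k:ℝ) := by exact_mod_cast hk2
      linarith
    exact_mod_cast h3
  obtain ⟨N, hN0, hNall⟩ := hSne
  have hmem : kg ε ∈ {m : ℕ | 0 < m ∧ ∀ n ≥ m, g n ε ≤ n - 1} := by
    rw [hkg ε]; exact Nat.sInf_mem ⟨N, hN0, hNall⟩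
  obtain ⟨hkgpos, hkgall⟩ := hmem
  have hn1 : 1 ≤ n := le_trans hkgpos hn
  have hG : g n ε ≤ n - 1 := hkgall n hn
  have hGn : g n ε < n := lt_of_le_of_lt hG (Nat.sub_lt hn1 one_pos)
  -- choose preimages
  have hy : ∀ j : Fin m, ∃ y : X, f^[(j : ℕ) * n] y = x j := by
    intro j
    have := Set.mem_iInter.mp (hx j) ((j : ℕ) * n)
    exact this
  choose y hy using hy
  -- apply weak specification
  obtain ⟨z, hz⟩ := hws m y (fun j => (j : ℕ) * n + g n ε)
      (fun j => (j : ℕ) * n + (n - 1)) ε hε hεε₀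
      (fun i => Nat.add_le_add_left hG _)
      (by
        intro i h
        simp only
        constructor
        · have : ((i : ℕ) + 1) * n = (i : ℕ) * n + n := by ring
          omega
        · have harg : ((⟨(i : ℕ) + 1, h⟩ : Fin m) : ℕ) * n + (n - 1) -
              (((⟨(i : ℕ) + 1, h⟩ : Fin m) : ℕ) * n + g n ε) + 1 = n - g n ε := by
            omega
          rw [harg]
          have h1 : g (n - g n ε) ε ≤ g n ε :=
            hgmono ε hε hεε₀ (n - g n ε) n (by omega) (by omega)
          have : ((i : ℕ) + 1) * n = (i : ℕ) * n + n := by ring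
          simp only [Fin.val_mk] at *
          omega)
  refine ⟨z, Set.mem_iInter.2 fun j => ?_⟩
  simp only [Set.mem_preimage, mistakeBall, Set.mem_setOf_eq]
  refine ⟨(Finset.Ico (g n ε) n).attachFin (fun k hk => (Finset.mem_Ico.mp hk).2),
    ⟨⟨g n ε, hGn⟩, by simp [Finset.mem_attachFin, Finset.mem_Ico, hGn]⟩, ?_, ?_⟩
  · rw [Finset.card_attachFin, Nat.card_Ico]
  · intro i hi
    have hmemi : g n ε ≤ (i : ℕ) ∧ (i : ℕ) < n :=
      Finset.mem_Ico.mp ((Finset.mem_attachFin _).mp hi)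
    rw [← Function.iterate_add_apply f (i : ℕ) ((j : ℕ) * n) z, ← hy j,
      ← Function.iterate_add_apply f (i : ℕ) ((j : ℕ) * n) (y j)]
    exact hz j ((i : ℕ) + (j : ℕ) * n) (by omega) (by omega)
end

section
/- Let (A^ℕ, σ) be the one-sided full shift over an alphabet A with |A| = 2m for some m≥2. Then for every non-trivial weight ϑ ∈ ℓ^∞(ℕ), the set N_ϑ(σ, A^ℕ) of points correlated with ϑ has Bowen topological entropy at least log m. -/
open Filter
open scoped ENNReal

section Bowen

variable {X : Type*} [MetricSpace X]

/-- The Bowen ball of length `u` and radius `r` around `x`. -/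
def dynBall (f : X → X) (x : X) (u : ℕ) (r : ℝ) : Set X :=
  {y | ∀ i < u, dist (f^[i] y) (f^[i] x) < r}

/-- Bowen's outer quantity `C(E; t, n, r, f)`: infimum, over countable covers of `E` by
Bowen balls of lengths `≥ n`, of `∑ e^{-t·u}`. -/
noncomputable def bowenC (f : X → X) (E : Set X) (t : ℝ) (n : ℕ) (r : ℝ) : ℝ≥0∞ :=
  ⨅ (c : ℕ → X × ℕ) (_ : (∀ k, n ≤ (c k).2) ∧
      E ⊆ ⋃ k, dynBall f (c k).1 (c k).2 r),
    ∑' k, ENNReal.ofReal (Real.exp (-(t * (c k).2)))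

/-- `C(E; t, r, f) = lim_{n→∞} C(E; t, n, r, f)` (the quantity is monotone in `n`). -/
noncomputable def bowenCLim (f : X → X) (E : Set X) (t r : ℝ) : ℝ≥0∞ :=
  ⨆ n : ℕ, bowenC f E t n r

/-- The Bowen entropy of `E` at scale `r`. -/
noncomputable def bowenEntropyAt (f : X → X) (E : Set X) (r : ℝ) : EReal :=
  sInf (Real.toEReal '' {t : ℝ | bowenCLim f E t r = 0})

/-- The Bowen topological entropy of a subset `E`. -/
noncomputable def bowenEntropy (f : X → X) (E : Set X) : EReal :=
  ⨆ (r : ℝ) (_ : 0 < r), bowenEntropyAt f E r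

/-- The set `N_ϑ(f,X)` of points correlated with the weight `ϑ`. -/
def corrSet (f : X → X) (ϑ : ℕ → ℝ) : Set X :=
  {x | ∃ φ : X → ℝ, Continuous φ ∧
    0 < Filter.limsup
        (fun N : ℕ => |∑ n ∈ Finset.range N, ϑ n * φ (f^[n] x)| / N) atTop}

end Bowen

-- The metric on sequence spaces: `dist x y = (1/2)^n` where `n` is the first index
-- where `x` and `y` differ.
attribute [local instance] PiNat.metricSpace

/-- The one-sided shift map on `(Fin a)^ℕ`. -/
def fullShift (a : ℕ) (x : ℕ → Fin a) : ℕ → Fin a := fun n => x (n + 1)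

/-! ### Auxiliary material for the proof -/

namespace CorrSetAux

open MeasureTheory

lemma fullShift_iterate_apply (a : ℕ) (x : ℕ → Fin a) (n k : ℕ) :
    (fullShift a)^[n] x k = x (k + n) := by
  induction n generalizing x with
  | zero => rfl
  | succ n ih =>
    rw [Function.iterate_succ_apply, ih]
    rfl

lemma haar_univ_eq_one (m : ℕ) [NeZero m] :
    Measure.addHaarMeasure (⊤ : TopologicalSpace.PositiveCompacts (ℕ → Fin m)) Set.univ = 1 := by
  have h := Measure.addHaarMeasure_self
    (K₀ := (⊤ : TopologicalSpace.PositiveCompacts (ℕ → Fin m)))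
  rwa [TopologicalSpace.PositiveCompacts.coe_top] at h

lemma haar_cylinder (m : ℕ) [NeZero m] (u : ℕ) (w : ℕ → Fin m) :
    Measure.addHaarMeasure (⊤ : TopologicalSpace.PositiveCompacts (ℕ → Fin m))
      {y : ℕ → Fin m | ∀ i < u, y i = w i} = ((m : ℝ≥0∞)⁻¹) ^ u := by
  classical
  set μ := Measure.addHaarMeasure (⊤ : TopologicalSpace.PositiveCompacts (ℕ → Fin m)) with hμ
  set C : (Fin u → Fin m) → Set (ℕ → Fin m) := fun v => {y | ∀ i : Fin u, y i.val = v i} with hC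
  have hmeas : ∀ v, MeasurableSet (C v) := by
    intro v
    have : C v = ⋂ i : Fin u, (fun y : ℕ → Fin m => y i.val) ⁻¹' {v i} := by
      ext y; simp [C]
    rw [this]
    exact MeasurableSet.iInter fun i =>
      (measurable_pi_apply _) (measurableSet_singleton _)
  have hinv : ∀ v, μ (C v) = μ (C fun _ => 0) := by
    intro v
    have key : C v =
        (fun y : ℕ → Fin m => (fun n => if h : n < u then -(v ⟨n, h⟩) else 0) + y) ⁻¹'
          (C fun _ => 0) := by
      ext y
      simp only [C, Set.mem_preimage, Set.mem_setOf_eq, Pi.add_apply]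
      constructor
      · intro h i
        simp [i.isLt, h i]
      · intro h i
        have := h i
        simp only [i.isLt, dif_pos] at this
        rw [neg_add_eq_zero] at this
        exact this.symm
    rw [key, measure_preimage_add]
  have hdisj : Pairwise (Function.onFun Disjoint C) := by
    intro v v' hne
    rw [Function.onFun, Set.disjoint_left]
    intro y hy hy'
    exact hne (funext fun i => (hy i).symm.trans (hy' i))
  have hunion : (⋃ v, C v) = Set.univ := by
    ext y
    simp only [Set.mem_iUnion, Set.mem_univ, iff_true]
    exact ⟨fun i => y i.val, fun i => rfl⟩
  have htot : ∑' v, μ (C v) = 1 := by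
    rw [← measure_iUnion hdisj hmeas, hunion, haar_univ_eq_one]
  rw [tsum_fintype] at htot
  have hconst : ((m ^ u : ℕ) : ℝ≥0∞) * μ (C fun _ => 0) = 1 := by
    calc ((m ^ u : ℕ) : ℝ≥0∞) * μ (C fun _ => 0)
        = ∑ v : Fin u → Fin m, μ (C fun _ => 0) := by
          rw [Finset.sum_const, nsmul_eq_mul, Finset.card_univ]
          congr 1
          simp [Fintype.card_fun]
      _ = ∑ v : Fin u → Fin m, μ (C v) := by
          exact Finset.sum_congr rfl fun v _ => (hinv v).symm
      _ = 1 := htot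
  have hne0 : ((m ^ u : ℕ) : ℝ≥0∞) ≠ 0 := by
    simp [pow_ne_zero, NeZero.ne m]
  have hnetop : ((m ^ u : ℕ) : ℝ≥0∞) ≠ ⊤ := ENNReal.natCast_ne_top _
  have hval : μ (C fun _ => 0) = ((m ^ u : ℕ) : ℝ≥0∞)⁻¹ := by
    calc μ (C fun _ => 0)
        = ((m ^ u : ℕ) : ℝ≥0∞)⁻¹ * (((m ^ u : ℕ) : ℝ≥0∞) * μ (C fun _ => 0)) := by
          rw [← mul_assoc, ENNReal.inv_mul_cancel hne0 hnetop, one_mul]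
      _ = ((m ^ u : ℕ) : ℝ≥0∞)⁻¹ := by rw [hconst, mul_one]
  have hset : {y : ℕ → Fin m | ∀ i < u, y i = w i} = C fun i => w i.val := by
    ext y
    constructor
    · intro h i; exact h i.val i.isLt
    · intro h i hi; exact h ⟨i, hi⟩
  rw [hset, hinv, hval]
  push_cast
  rw [ENNReal.inv_pow]

variable (m : ℕ) (ϑ : ℕ → ℝ)

/-- The embedding of the `m`-letter alphabet into the `2m`-letter alphabet, landing in the
lower half if `0 ≤ ϑ n` and in the upper half otherwise. -/
noncomputable def emb (n : ℕ) (j : Fin m) : Fin (2 * m) :=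
  if 0 ≤ ϑ n then ⟨j.val, by have := j.isLt; omega⟩
  else ⟨j.val + m, by have := j.isLt; omega⟩

lemma emb_lt_iff (n : ℕ) (j : Fin m) : ((emb m ϑ n j : Fin (2 * m)) : ℕ) < m ↔ 0 ≤ ϑ n := by
  by_cases h : 0 ≤ ϑ n <;> simp only [emb, h, if_true, if_false]
  · simpa using j.isLt
  · simp only [iff_false, h]
    omega

lemma emb_injective (n : ℕ) : Function.Injective (emb m ϑ n) := by
  intro a b h
  by_cases hs : 0 ≤ ϑ n <;> simp only [emb, hs, if_true, if_false] at h <;>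
  · have := congrArg Fin.val h
    simp only [Fin.val] at this
    exact Fin.ext (by omega)

/-- The map from `(Fin m)^ℕ` into `(Fin (2m))^ℕ` whose image consists of correlated points. -/
noncomputable def gmap (y : ℕ → Fin m) : ℕ → Fin (2 * m) := fun n => emb m ϑ n (y n)

end CorrSetAux

open CorrSetAux MeasureTheory in
/-- For the one-sided full shift on an alphabet of cardinality `2m`
(`m ≥ 2`), and any non-trivial weight `ϑ`, the set `N_ϑ(σ, A^ℕ)` of points correlated
with `ϑ` has Bowen topological entropy at least `log m`. -/
theorem corrSet_entropy_full_shift (m : ℕ) (hm : 2 ≤ m)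
    (ϑ : ℕ → ℝ) (hbd : ∃ C : ℝ, ∀ n, |ϑ n| ≤ C)
    (hnt : 0 < Filter.limsup
      (fun N : ℕ => (∑ n ∈ Finset.range N, |ϑ n|) / N) atTop) :
    (Real.log m : EReal) ≤
      bowenEntropy (fullShift (2 * m)) (corrSet (fullShift (2 * m)) ϑ) := by
  classical
  haveI : NeZero m := ⟨by omega⟩
  set f := fullShift (2 * m) with hf
  set S := corrSet f ϑ with hS
  set μ := Measure.addHaarMeasure (⊤ : TopologicalSpace.PositiveCompacts (ℕ → Fin m)) with hμ
  -- the test function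
  set φ : (ℕ → Fin (2 * m)) → ℝ := fun x => if ((x 0 : ℕ) < m) then 1 else -1 with hφdef
  have hφ : Continuous φ := by
    rw [Metric.continuous_iff]
    intro b ε hε
    refine ⟨1 / 2, by norm_num, fun a hab => ?_⟩
    have h0 : a 0 = b 0 := by
      refine PiNat.apply_eq_of_dist_lt (n := 0) ?_ le_rfl
      rw [pow_zero]
      exact lt_trans hab (by norm_num)
    simp only [hφdef, h0]
    simpa using hε
  -- every point in the range of `gmap` is correlated with `ϑ`
  have hg_corr : ∀ y : ℕ → Fin m, gmap m ϑ y ∈ S := by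
    intro y
    refine ⟨φ, hφ, ?_⟩
    have hpt : ∀ n : ℕ, ϑ n * φ (f^[n] (gmap m ϑ y)) = |ϑ n| := by
      intro n
      have h0 : (f^[n] (gmap m ϑ y)) 0 = gmap m ϑ y n := by
        rw [hf, fullShift_iterate_apply]
        simp
      by_cases hs : 0 ≤ ϑ n
      · have : ((gmap m ϑ y n : Fin (2 * m)) : ℕ) < m := (emb_lt_iff m ϑ n (y n)).mpr hs
        rw [hφdef]
        simp only [h0, this, if_true]
        rw [mul_one, abs_of_nonneg hs]
      · have : ¬ ((gmap m ϑ y n : Fin (2 * m)) : ℕ) < m := fun hcon =>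
          hs ((emb_lt_iff m ϑ n (y n)).mp hcon)
        rw [hφdef]
        simp only [h0, this, if_false]
        rw [mul_neg_one, abs_of_neg (not_le.mp hs)]
    have hfun : (fun N : ℕ => |∑ n ∈ Finset.range N, ϑ n * φ (f^[n] (gmap m ϑ y))| / N)
        = fun N : ℕ => (∑ n ∈ Finset.range N, |ϑ n|) / N := by
      funext N
      have hsum : (∑ n ∈ Finset.range N, ϑ n * φ (f^[n] (gmap m ϑ y)))
          = ∑ n ∈ Finset.range N, |ϑ n| :=
        Finset.sum_congr rfl fun n _ => hpt n
      rw [hsum, abs_of_nonneg (Finset.sum_nonneg fun n _ => abs_nonneg _)]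
    rw [hfun]
    exact hnt
  -- Bowen balls of radius 1/2 pull back into cylinders
  have hball : ∀ (x : ℕ → Fin (2 * m)) (u : ℕ),
      gmap m ϑ ⁻¹' dynBall f x u (1 / 2) ⊆
        {y : ℕ → Fin m | ∀ i < u, emb m ϑ i (y i) = x i} := by
    intro x u y hy i hi
    have hdist := hy i hi
    have h0 : (f^[i] (gmap m ϑ y)) 0 = (f^[i] x) 0 := by
      refine PiNat.apply_eq_of_dist_lt (n := 0) ?_ le_rfl
      rw [pow_zero]
      exact lt_trans hdist (by norm_num)
    rw [hf, fullShift_iterate_apply, fullShift_iterate_apply] at h0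
    simpa [gmap] using h0
  have hm0 : (0 : ℝ) < m := by positivity
  -- per-ball measure estimate
  have hterm : ∀ (t : ℝ), t ≤ Real.log m → ∀ (x : ℕ → Fin (2 * m)) (u : ℕ),
      μ (gmap m ϑ ⁻¹' dynBall f x u (1 / 2)) ≤ ENNReal.ofReal (Real.exp (-(t * u))) := by
    intro t ht x u
    have step1 : μ (gmap m ϑ ⁻¹' dynBall f x u (1 / 2)) ≤ ((m : ℝ≥0∞)⁻¹) ^ u := by
      refine le_trans (measure_mono (hball x u)) ?_
      by_cases hne : ({y : ℕ → Fin m | ∀ i < u, emb m ϑ i (y i) = x i}).Nonempty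
      · obtain ⟨y₀, hy₀⟩ := hne
        have hsub : {y : ℕ → Fin m | ∀ i < u, emb m ϑ i (y i) = x i} ⊆
            {y : ℕ → Fin m | ∀ i < u, y i = y₀ i} := by
          intro y hy i hi
          exact emb_injective m ϑ i ((hy i hi).trans (hy₀ i hi).symm)
        exact le_of_le_of_eq (measure_mono hsub) (haar_cylinder m u y₀)
      · rw [Set.not_nonempty_iff_eq_empty.mp hne]
        simp
    refine step1.trans ?_
    have hval : ((m : ℝ≥0∞)⁻¹) ^ u = ENNReal.ofReal (Real.exp (-(Real.log m * u))) := by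
      have h1 : Real.exp (-(Real.log m * u)) = ((m : ℝ)⁻¹) ^ u := by
        rw [show -(Real.log m * (u : ℝ)) = (u : ℕ) * (-Real.log m) by push_cast; ring,
          Real.exp_nat_mul, Real.exp_neg, Real.exp_log hm0]
      rw [h1, ENNReal.ofReal_pow (by positivity), ENNReal.ofReal_inv_of_pos hm0,
        ENNReal.ofReal_natCast]
    rw [hval]
    apply ENNReal.ofReal_le_ofReal
    apply Real.exp_le_exp.mpr
    have : t * u ≤ Real.log m * u :=
      mul_le_mul_of_nonneg_right ht (by positivity)
    linarith
  -- the entropy at scale 1/2 is at least log m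
  have hAt : (Real.log m : EReal) ≤ bowenEntropyAt f S (1 / 2) := by
    refine le_sInf ?_
    rintro b ⟨t, ht, rfl⟩
    show (Real.log m : EReal) ≤ (t : EReal)
    rw [EReal.coe_le_coe_iff]
    by_contra hlt
    push_neg at hlt
    have hle : t ≤ Real.log m := hlt.le
    have hone : (1 : ℝ≥0∞) ≤ bowenC f S t 0 (1 / 2) := by
      refine le_iInf fun c => le_iInf fun hc => ?_
      have hcov := hc.2
      have h2 : Set.univ ⊆ gmap m ϑ ⁻¹' (⋃ k, dynBall f (c k).1 (c k).2 (1 / 2)) := by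
        intro y _
        exact hcov (hg_corr y)
      calc (1 : ℝ≥0∞) = μ Set.univ := (haar_univ_eq_one m).symm
        _ ≤ μ (gmap m ϑ ⁻¹' (⋃ k, dynBall f (c k).1 (c k).2 (1 / 2))) := measure_mono h2
        _ = μ (⋃ k, gmap m ϑ ⁻¹' dynBall f (c k).1 (c k).2 (1 / 2)) := by
            rw [Set.preimage_iUnion]
        _ ≤ ∑' k, μ (gmap m ϑ ⁻¹' dynBall f (c k).1 (c k).2 (1 / 2)) := measure_iUnion_le _
        _ ≤ ∑' k, ENNReal.ofReal (Real.exp (-(t * (c k).2))) :=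
            ENNReal.tsum_le_tsum fun k => hterm t hle _ _
    have hone' : (1 : ℝ≥0∞) ≤ bowenCLim f S t (1 / 2) :=
      hone.trans (le_iSup (fun n => bowenC f S t n (1 / 2)) 0)
    rw [ht] at hone'
    simp at hone'
  calc (Real.log m : EReal) ≤ bowenEntropyAt f S (1 / 2) := hAt
    _ ≤ bowenEntropy f S :=
        le_iSup_of_le (1 / 2) (le_iSup_of_le (by norm_num : (0 : ℝ) < 1 / 2) le_rfl)
end

section
/- Let (X,f) be a dynamical system, L∈ℕ⁺, and μ an ergodic f^L-invariant Borel probability measure on X. Define ν := (1/L)∑_{i=0}^{L−1} μ∘f^{-i}. Then ν is an f-invariant Borel probability measure, ν is ergodic for f, and the metric entropies satisfy h_ν(f) = (1/L) h_μ(f^L). -/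
open MeasureTheory
open scoped ENNReal

section MetricEntropy

variable {X : Type*} [MeasurableSpace X]

/-- The join `⋁_{j<n} T^{-j} P` of the first `n` pullbacks of a finite partition `P`. -/
def joinPart (T : X → X) {k : ℕ} (P : Fin k → Set X) (n : ℕ) :
    (Fin n → Fin k) → Set X :=
  fun s => ⋂ j : Fin n, T^[(j : ℕ)] ⁻¹' P (s j)

/-- The static entropy `H(P) = ∑ -μ(Pᵢ) log μ(Pᵢ)` of a finite family of sets. -/
noncomputable def partH (μ : Measure X) {ι : Type*} [Fintype ι] (P : ι → Set X) : ℝ :=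
  ∑ i, Real.negMulLog (μ (P i)).toReal

/-- The dynamical entropy `h(T,P) = lim (1/n) H(⋁_{j<n} T^{-j}P)`, computed as the
infimum of the subadditive sequence. -/
noncomputable def entropyOfPart (μ : Measure X) (T : X → X) {k : ℕ}
    (P : Fin k → Set X) : ℝ :=
  ⨅ n : ℕ, partH μ (joinPart T P (n + 1)) / (n + 1)

/-- The Kolmogorov–Sinai metric entropy `h_μ(T)`: supremum of `h(T,P)` over finite
measurable partitions `P` of `X`. -/
noncomputable def metricEntropy (μ : Measure X) (T : X → X) : ℝ≥0∞ :=
  ⨆ (k : ℕ) (P : Fin k → Set X) (_ : (∀ i, MeasurableSet (P i)) ∧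
      Pairwise (Function.onFun Disjoint P) ∧ (⋃ i, P i) = Set.univ),
    ENNReal.ofReal (entropyOfPart μ T P)

end MetricEntropy

namespace AME

open Filter
open scoped Topology

variable {X : Type*} [MeasurableSpace X]

lemma negMulLog_le_one {x : ℝ} (h0 : 0 ≤ x) (h1 : x ≤ 1) : Real.negMulLog x ≤ 1 := by
  rcases h0.eq_or_lt with h | h
  · simp [← h]
  · have hlog := Real.log_le_sub_one_of_pos (show (0:ℝ) < x⁻¹ by positivity)
    rw [Real.log_inv] at hlog
    have hx : Real.negMulLog x = x * (-Real.log x) := by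
      rw [Real.negMulLog]; ring
    rw [hx]
    calc x * (-Real.log x) ≤ x * (x⁻¹ - 1) := by
          apply mul_le_mul_of_nonneg_left (by linarith) h0
      _ = 1 - x := by field_simp
      _ ≤ 1 := by linarith

lemma negMulLog_sum_le {ι : Type*} (s : Finset ι) (x : ι → ℝ) (hx : ∀ i ∈ s, 0 ≤ x i) :
    Real.negMulLog (∑ i ∈ s, x i) ≤ ∑ i ∈ s, Real.negMulLog (x i) := by
  have hS : Real.negMulLog (∑ i ∈ s, x i) = ∑ i ∈ s, x i * (-Real.log (∑ j ∈ s, x j)) := by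
    rw [← Finset.sum_mul, Real.negMulLog]; ring
  rw [hS]
  apply Finset.sum_le_sum
  intro i hi
  rcases (hx i hi).eq_or_lt with h | h
  · simp [← h]
  · have hle : x i ≤ ∑ j ∈ s, x j := Finset.single_le_sum hx hi
    have hlog : Real.log (x i) ≤ Real.log (∑ j ∈ s, x j) := Real.log_le_log h hle
    calc x i * (-Real.log (∑ j ∈ s, x j)) ≤ x i * (-Real.log (x i)) :=
          mul_le_mul_of_nonneg_left (by linarith) h.le
      _ = Real.negMulLog (x i) := by rw [Real.negMulLog]; ring

lemma gibbs_term {p P Q : ℝ} (h0 : 0 ≤ p) (hP : p ≤ P) (hQ : p ≤ Q) :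
    Real.negMulLog p ≤ p * (-Real.log P) + p * (-Real.log Q) - p + P * Q := by
  have hP0 : 0 ≤ P := le_trans h0 hP
  have hQ0 : 0 ≤ Q := le_trans h0 hQ
  rcases h0.eq_or_lt with h | h
  · rw [← h]; simp; positivity
  · have hP' : 0 < P := lt_of_lt_of_le h hP
    have hQ' : 0 < Q := lt_of_lt_of_le h hQ
    have hpq : (0:ℝ) < P * Q / p := by positivity
    have hlog := Real.log_le_sub_one_of_pos hpq
    rw [Real.log_div (by positivity) (ne_of_gt h),
      Real.log_mul (ne_of_gt hP') (ne_of_gt hQ')] at hlog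
    have h2 : p * (Real.log P + Real.log Q - Real.log p) ≤ p * (P*Q/p - 1) :=
      mul_le_mul_of_nonneg_left hlog h.le
    have h3 : p * (P*Q/p - 1) = P*Q - p := by field_simp
    rw [Real.negMulLog]
    nlinarith [h2, h3]

lemma sum_negMulLog_pair_le {ι κ : Type*} [Fintype ι] [Fintype κ] (p : ι → κ → ℝ)
    (h0 : ∀ i j, 0 ≤ p i j) (htot : ∑ i, ∑ j, p i j ≤ 1) :
    ∑ i, ∑ j, Real.negMulLog (p i j) ≤
      (∑ i, Real.negMulLog (∑ j, p i j)) + ∑ j, Real.negMulLog (∑ i, p i j) := by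
  have ht0 : (0:ℝ) ≤ ∑ i, ∑ j, p i j :=
    Finset.sum_nonneg fun i _ => Finset.sum_nonneg fun j _ => h0 i j
  have key : ∀ i j, Real.negMulLog (p i j) ≤
      p i j * (-Real.log (∑ j', p i j')) + p i j * (-Real.log (∑ i', p i' j)) - p i j
        + (∑ j', p i j') * (∑ i', p i' j) := by
    intro i j
    exact gibbs_term (h0 i j)
      (Finset.single_le_sum (fun j' _ => h0 i j') (Finset.mem_univ j))
      (Finset.single_le_sum (fun i' _ => h0 i' j) (Finset.mem_univ i))
  have step1 : ∑ i, ∑ j, Real.negMulLog (p i j) ≤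
      ∑ i, ∑ j, (p i j * (-Real.log (∑ j', p i j')) + p i j * (-Real.log (∑ i', p i' j))
        - p i j + (∑ j', p i j') * (∑ i', p i' j)) :=
    Finset.sum_le_sum fun i _ => Finset.sum_le_sum fun j _ => key i j
  have e1 : ∀ i : ι, ∑ j, p i j * (-Real.log (∑ j', p i j')) = Real.negMulLog (∑ j, p i j) := by
    intro i; rw [← Finset.sum_mul, Real.negMulLog]; ring
  have e2 : ∀ j : κ, ∑ i, p i j * (-Real.log (∑ i', p i' j)) = Real.negMulLog (∑ i, p i j) := by
    intro j; rw [← Finset.sum_mul, Real.negMulLog]; ring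
  have e3 : ∑ i, ∑ j, (∑ j', p i j') * (∑ i', p i' j)
      = (∑ i, ∑ j', p i j') * (∑ j, ∑ i', p i' j) := by
    rw [Finset.sum_mul_sum]
  have e4 : ∑ j : κ, ∑ i : ι, p i j = ∑ i, ∑ j, p i j := Finset.sum_comm
  have expand : ∑ i, ∑ j, (p i j * (-Real.log (∑ j', p i j')) + p i j * (-Real.log (∑ i', p i' j))
        - p i j + (∑ j', p i j') * (∑ i', p i' j))
      = (∑ i, Real.negMulLog (∑ j, p i j)) + (∑ j, Real.negMulLog (∑ i, p i j))
        - (∑ i, ∑ j, p i j) + (∑ i, ∑ j, p i j) * (∑ i, ∑ j, p i j) := by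
    simp only [Finset.sum_add_distrib, Finset.sum_sub_distrib]
    rw [e3, e4]
    congr 1
    congr 1
    congr 1
    · exact Finset.sum_congr rfl fun i _ => e1 i
    · rw [Finset.sum_comm]
      exact Finset.sum_congr rfl fun j _ => e2 j
  rw [expand] at step1
  nlinarith [step1, ht0, htot]


lemma toReal_prob_le_one (m : Measure X) [IsProbabilityMeasure m] (s : Set X) :
    (m s).toReal ≤ 1 := by
  have h := prob_le_one (μ := m) (s := s)
  calc (m s).toReal ≤ ((1 : ℝ≥0∞)).toReal := ENNReal.toReal_mono ENNReal.one_ne_top h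
    _ = 1 := by simp

lemma partH_nonneg {ι : Type*} [Fintype ι] (m : Measure X) [IsProbabilityMeasure m]
    (A : ι → Set X) : 0 ≤ partH m A :=
  Finset.sum_nonneg fun i _ =>
    Real.negMulLog_nonneg ENNReal.toReal_nonneg (toReal_prob_le_one m (A i))

lemma partH_le_card {ι : Type*} [Fintype ι] (m : Measure X) [IsProbabilityMeasure m]
    (A : ι → Set X) : partH m A ≤ (Fintype.card ι : ℝ) := by
  calc partH m A ≤ ∑ _i : ι, (1:ℝ) :=
        Finset.sum_le_sum fun i _ =>
          negMulLog_le_one ENNReal.toReal_nonneg (toReal_prob_le_one m (A i))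
    _ = (Fintype.card ι : ℝ) := by simp

lemma partH_comp_equiv {ι ι' : Type*} [Fintype ι] [Fintype ι'] (m : Measure X)
    (D : ι → Set X) (Ψ : ι' ≃ ι) : partH m (D ∘ ⇑Ψ) = partH m D :=
  Fintype.sum_equiv Ψ _ _ fun _ => rfl

/-- total mass of a disjoint measurable family is at most 1. -/
lemma sum_toReal_le_one {ι : Type*} [Fintype ι] (m : Measure X) [IsProbabilityMeasure m]
    (A : ι → Set X) (hAm : ∀ i, MeasurableSet (A i))
    (hAd : Pairwise (Function.onFun Disjoint A)) :
    ∑ i, (m (A i)).toReal ≤ 1 := by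
  have h1 : ∑ i, m (A i) = m (⋃ i ∈ Finset.univ, A i) := by
    rw [measure_biUnion_finset (fun i _ j _ hij => hAd hij) (fun i _ => hAm i)]
  have h2 : m (⋃ i ∈ Finset.univ, A i) ≤ 1 := prob_le_one
  have h3 : ∑ i, m (A i) ≤ 1 := h1 ▸ h2
  calc ∑ i, (m (A i)).toReal = (∑ i, m (A i)).toReal :=
        (ENNReal.toReal_sum (fun i _ => measure_ne_top m (A i))).symm
    _ ≤ (1:ℝ≥0∞).toReal := ENNReal.toReal_mono ENNReal.one_ne_top h3
    _ = 1 := by simp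

/-- fiberwise coarsening: if each `A i` is the union of the fibers of `π` then
`H(A) ≤ H(D)`. -/
lemma partH_le_of_fiber {ι τ : Type*} [Fintype ι] [Fintype τ] [DecidableEq ι]
    (m : Measure X) [IsProbabilityMeasure m]
    (A : ι → Set X) (D : τ → Set X) (hDm : ∀ t, MeasurableSet (D t))
    (hDd : Pairwise (Function.onFun Disjoint D)) (π : τ → ι)
    (hA : ∀ i, A i = ⋃ t ∈ Finset.univ.filter (fun t => π t = i), D t) :
    partH m A ≤ partH m D := by
  have hmeas : ∀ i : ι, (m (A i)).toReal
      = ∑ t ∈ Finset.univ.filter (fun t => π t = i), (m (D t)).toReal := by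
    intro i
    rw [hA i, measure_biUnion_finset (fun a _ b _ hab => hDd hab) (fun t _ => hDm t),
      ENNReal.toReal_sum (fun t _ => measure_ne_top m (D t))]
  have hsum1 : ∀ i : ι, (m (A i)).toReal ≤ 1 := fun i => toReal_prob_le_one m (A i)
  calc partH m A = ∑ i, Real.negMulLog (∑ t ∈ Finset.univ.filter (fun t => π t = i),
        (m (D t)).toReal) := by
        exact Finset.sum_congr rfl fun i _ => by rw [hmeas i]
    _ ≤ ∑ i, ∑ t ∈ Finset.univ.filter (fun t => π t = i), Real.negMulLog ((m (D t)).toReal) :=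
        Finset.sum_le_sum fun i _ =>
          negMulLog_sum_le _ _ (fun t _ => ENNReal.toReal_nonneg)
    _ = ∑ t, Real.negMulLog ((m (D t)).toReal) :=
        Finset.sum_fiberwise_of_maps_to (fun t _ => Finset.mem_univ (π t)) _
    _ = partH m D := rfl

lemma partH_pair_le {ι κ : Type*} [Fintype ι] [Fintype κ] (m : Measure X)
    [IsProbabilityMeasure m] (A : ι → Set X) (B : κ → Set X)
    (hAm : ∀ i, MeasurableSet (A i)) (hAd : Pairwise (Function.onFun Disjoint A))
    (hAc : (⋃ i, A i) = Set.univ)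
    (hBm : ∀ j, MeasurableSet (B j)) (hBd : Pairwise (Function.onFun Disjoint B))
    (hBc : (⋃ j, B j) = Set.univ) :
    partH m (fun q : ι × κ => A q.1 ∩ B q.2) ≤ partH m A + partH m B := by
  have hmarg1 : ∀ i, (m (A i)).toReal = ∑ j, (m (A i ∩ B j)).toReal := by
    intro i
    have hcell : A i = ⋃ j ∈ Finset.univ, (A i ∩ B j) := by
      ext x
      constructor
      · intro hx
        have hx2 : x ∈ ⋃ j, B j := hBc ▸ Set.mem_univ x
        rcases Set.mem_iUnion.mp hx2 with ⟨j, hj⟩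
        exact Set.mem_biUnion (Finset.mem_univ j) ⟨hx, hj⟩
      · intro hx
        rcases Set.mem_iUnion₂.mp hx with ⟨j, _, hj⟩
        exact hj.1
    calc (m (A i)).toReal = (m (⋃ j ∈ Finset.univ, (A i ∩ B j))).toReal := by rw [← hcell]
      _ = ∑ j, (m (A i ∩ B j)).toReal := by
          rw [measure_biUnion_finset
            (fun a _ b _ hab =>
              Disjoint.mono Set.inter_subset_right Set.inter_subset_right (hBd hab))
            (fun j _ => (hAm i).inter (hBm j)),
            ENNReal.toReal_sum (fun j _ => measure_ne_top m _)]
  have hmarg2 : ∀ j, (m (B j)).toReal = ∑ i, (m (A i ∩ B j)).toReal := by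
    intro j
    have hcell : B j = ⋃ i ∈ Finset.univ, (A i ∩ B j) := by
      ext x
      constructor
      · intro hx
        have hx2 : x ∈ ⋃ i, A i := hAc ▸ Set.mem_univ x
        rcases Set.mem_iUnion.mp hx2 with ⟨i, hi⟩
        exact Set.mem_biUnion (Finset.mem_univ i) ⟨hi, hx⟩
      · intro hx
        rcases Set.mem_iUnion₂.mp hx with ⟨i, _, hi⟩
        exact hi.2
    calc (m (B j)).toReal = (m (⋃ i ∈ Finset.univ, (A i ∩ B j))).toReal := by rw [← hcell]
      _ = ∑ i, (m (A i ∩ B j)).toReal := by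
          rw [measure_biUnion_finset
            (fun a _ b _ hab =>
              Disjoint.mono Set.inter_subset_left Set.inter_subset_left (hAd hab))
            (fun i _ => (hAm i).inter (hBm j)),
            ENNReal.toReal_sum (fun i _ => measure_ne_top m _)]
  have htot : ∑ i, ∑ j, (m (A i ∩ B j)).toReal ≤ 1 := by
    have h1 := sum_toReal_le_one m A hAm hAd
    calc ∑ i, ∑ j, (m (A i ∩ B j)).toReal = ∑ i, (m (A i)).toReal :=
          Finset.sum_congr rfl fun i _ => (hmarg1 i).symm
      _ ≤ 1 := h1
  have key := sum_negMulLog_pair_le (fun i j => (m (A i ∩ B j)).toReal)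
    (fun i j => ENNReal.toReal_nonneg) htot
  calc partH m (fun q : ι × κ => A q.1 ∩ B q.2)
      = ∑ i, ∑ j, Real.negMulLog ((m (A i ∩ B j)).toReal) := by
        rw [partH, Fintype.sum_prod_type]
    _ ≤ (∑ i, Real.negMulLog (∑ j, (m (A i ∩ B j)).toReal))
        + ∑ j, Real.negMulLog (∑ i, (m (A i ∩ B j)).toReal) := key
    _ = partH m A + partH m B := by
        rw [partH, partH]
        congr 1
        · exact Finset.sum_congr rfl fun i _ => by rw [← hmarg1 i]
        · exact Finset.sum_congr rfl fun j _ => by rw [← hmarg2 j]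


/-- generalized join with arbitrary exponents. -/
def wJoin (f : X → X) {k : ℕ} (P : Fin k → Set X) {ι : Type*} (e : ι → ℕ) :
    (ι → Fin k) → Set X :=
  fun s => ⋂ j, f^[e j] ⁻¹' P (s j)

lemma joinPart_eq_wJoin (f : X → X) {k : ℕ} (P : Fin k → Set X) (n : ℕ) :
    joinPart f P n = wJoin f P (fun j : Fin n => (j : ℕ)) := rfl

section Cells

variable {f : X → X} {k : ℕ} {P : Fin k → Set X}

lemma wJoin_measurable (hf : Measurable f) (hPm : ∀ i, MeasurableSet (P i))
    {ι : Type*} [Countable ι] (e : ι → ℕ) (s : ι → Fin k) :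
    MeasurableSet (wJoin f P e s) :=
  MeasurableSet.iInter fun j => (hf.iterate (e j)) (hPm (s j))

lemma wJoin_disjoint (hPd : Pairwise (Function.onFun Disjoint P))
    {ι : Type*} (e : ι → ℕ) :
    Pairwise (Function.onFun Disjoint (wJoin f P e)) := by
  intro s s' hss
  rcases Function.ne_iff.mp hss with ⟨j, hj⟩
  exact Disjoint.mono (Set.iInter_subset _ j) (Set.iInter_subset _ j)
    (Disjoint.preimage _ (hPd hj))

lemma wJoin_cover (hPc : (⋃ i, P i) = Set.univ) {ι : Type*} (e : ι → ℕ) :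
    (⋃ s, wJoin f P e s) = Set.univ := by
  have hex : ∀ y : X, ∃ c, y ∈ P c := by
    intro y
    have : y ∈ ⋃ i, P i := hPc ▸ Set.mem_univ y
    exact Set.mem_iUnion.mp this
  ext x
  simp only [Set.mem_iUnion, Set.mem_univ, iff_true]
  refine ⟨fun j => (hex (f^[e j] x)).choose, ?_⟩
  exact Set.mem_iInter.mpr fun j => (hex (f^[e j] x)).choose_spec

/-- invariance transfer: entropy of a time-shifted window w.r.t. the pullback measure. -/
lemma partH_wJoin_shift (hf : Measurable f) (hPm : ∀ i, MeasurableSet (P i))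
    (m : Measure X) {ι : Type*} [Fintype ι] [DecidableEq ι] (a : ℕ) (e : ι → ℕ) :
    partH (Measure.map f^[a] m) (wJoin f P e) = partH m (wJoin f P (fun j => a + e j)) := by
  refine Finset.sum_congr rfl fun s _ => ?_
  have hkey : (Measure.map f^[a] m) (wJoin f P e s) = m (wJoin f P (fun j => a + e j) s) := by
    rw [Measure.map_apply (hf.iterate a) (wJoin_measurable hf hPm e s)]
    congr 1
    ext x
    simp only [wJoin, Set.mem_preimage, Set.mem_iInter]
    constructor
    · intro h j
      have := h j
      rwa [← Function.iterate_add_apply, Nat.add_comm] at this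
    · intro h j
      have := h j
      rwa [Nat.add_comm, Function.iterate_add_apply] at this
  rw [hkey]

/-- reindexing the positions of a window join does not change the entropy. -/
lemma partH_wJoin_reindex (m : Measure X) {ι ι' : Type*} [Fintype ι] [Fintype ι'] [DecidableEq ι] [DecidableEq ι']
    (g : ι' ≃ ι) (e : ι → ℕ) :
    partH m (wJoin f P (e ∘ ⇑g)) = partH m (wJoin f P e) := by
  refine Fintype.sum_equiv (g.arrowCongr (Equiv.refl (Fin k))) _ _ fun s' => ?_
  have hkey : wJoin f P (e ∘ ⇑g) s' = wJoin f P e ((g.arrowCongr (Equiv.refl (Fin k))) s') := by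
    ext x
    simp only [wJoin, Set.mem_iInter, Function.comp_apply, Set.mem_preimage]
    constructor
    · intro h j
      have := h (g.symm j)
      simpa [Equiv.arrowCongr] using this
    · intro h j'
      have := h (g j')
      simpa [Equiv.arrowCongr] using this
  rw [hkey]

/-- monotonicity: a sub-window (injective selection of positions below `M`) has
smaller entropy than the full join of length `M`. -/
lemma partH_wJoin_le_joinPart (m : Measure X) [IsProbabilityMeasure m]
    (hf : Measurable f) (hPm : ∀ i, MeasurableSet (P i))
    (hPd : Pairwise (Function.onFun Disjoint P)) (hPc : (⋃ i, P i) = Set.univ)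
    {b M : ℕ} (e : Fin b → ℕ) (hinj : Function.Injective e) (hlt : ∀ j, e j < M) :
    partH m (wJoin f P e) ≤ partH m (joinPart f P M) := by
  classical
  have hex : ∀ y : X, ∃ c, y ∈ P c := by
    intro y
    have : y ∈ ⋃ i, P i := hPc ▸ Set.mem_univ y
    exact Set.mem_iUnion.mp this
  set ρ : Fin b → Fin M := fun j => ⟨e j, hlt j⟩ with hρ
  have hρinj : Function.Injective ρ := by
    intro a b hab
    apply hinj
    simpa [hρ, Fin.ext_iff] using hab
  apply partH_le_of_fiber m (wJoin f P e) (joinPart f P M)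
    (fun t => wJoin_measurable hf hPm _ t)
    (wJoin_disjoint hPd _) (fun σ => σ ∘ ρ)
  intro s
  ext x
  simp only [Set.mem_iUnion, Finset.mem_filter, Finset.mem_univ, true_and]
  constructor
  · intro hx
    have hx' : ∀ j, f^[e j] x ∈ P (s j) := Set.mem_iInter.mp hx
    refine ⟨fun t => if h : ∃ j, ρ j = t then s h.choose else (hex (f^[(t:ℕ)] x)).choose,
      ?_, ?_⟩
    · funext j
      have hj : ∃ j', ρ j' = ρ j := ⟨j, rfl⟩
      simp only [Function.comp_apply, hj, dif_pos]
      have := hρinj hj.choose_spec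
      rw [this]
    · apply Set.mem_iInter.mpr
      intro t
      by_cases h : ∃ j, ρ j = t
      · simp only [h, dif_pos]
        have het : e h.choose = (t : ℕ) := by
          have := h.choose_spec
          simpa [hρ, Fin.ext_iff] using this
        simpa [Set.mem_preimage, het] using hx' h.choose
      · simp only [h, dif_neg, not_false_iff]
        exact (hex (f^[(t:ℕ)] x)).choose_spec
  · rintro ⟨σ, hσ, hxσ⟩
    subst hσ
    apply Set.mem_iInter.mpr
    intro j
    have := Set.mem_iInter.mp hxσ (ρ j)
    simpa [hρ] using this

/-- subadditivity under splitting the window `[0, b+c)` into `[0,b)` and `[b, b+c)`. -/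
lemma partH_joinPart_split (m : Measure X) [IsProbabilityMeasure m]
    (hf : Measurable f) (hPm : ∀ i, MeasurableSet (P i))
    (hPd : Pairwise (Function.onFun Disjoint P)) (hPc : (⋃ i, P i) = Set.univ)
    (b c : ℕ) :
    partH m (joinPart f P (b + c)) ≤ partH m (joinPart f P b)
      + partH m (wJoin f P (fun j : Fin c => b + (j : ℕ))) := by
  set A : (Fin b → Fin k) → Set X := joinPart f P b with hA
  set B : (Fin c → Fin k) → Set X := wJoin f P (fun j : Fin c => b + (j : ℕ)) with hB
  set E : (Fin (b + c) → Fin k) ≃ ((Fin b → Fin k) × (Fin c → Fin k)) :=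
    ((finSumFinEquiv.symm).arrowCongr (Equiv.refl (Fin k))).trans
      (Equiv.sumArrowEquivProdArrow _ _ _) with hE
  have hcell : joinPart f P (b + c) = (fun q : _ × _ => A q.1 ∩ B q.2) ∘ ⇑E := by
    funext σ
    have hEσ1 : (E σ).1 = fun i : Fin b => σ (Fin.castAdd c i) := by
      funext i
      simp [hE, Equiv.sumArrowEquivProdArrow, Equiv.arrowCongr]
    have hEσ2 : (E σ).2 = fun i : Fin c => σ (Fin.natAdd b i) := by
      funext i
      simp [hE, Equiv.sumArrowEquivProdArrow, Equiv.arrowCongr]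
    simp only [Function.comp_apply, hEσ1, hEσ2]
    rw [joinPart]
    rw [← finSumFinEquiv.surjective.iInter_comp
      (fun t : Fin (b+c) => f^[(t:ℕ)] ⁻¹' P (σ t)), Set.iInter_sum]
    show _ = A _ ∩ B _
    rw [hA, hB, joinPart, wJoin]
    congr 1
  rw [hcell]
  rw [partH_comp_equiv m _ E]
  exact partH_pair_le m A B
    (fun s => wJoin_measurable hf hPm _ s) (wJoin_disjoint hPd _) (wJoin_cover hPc _)
    (fun s => wJoin_measurable hf hPm _ s) (wJoin_disjoint hPd _) (wJoin_cover hPc _)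

end Cells


lemma map_iterate_eq {g : X → X} (hg : Measurable g) {m : Measure X}
    (h : Measure.map g m = m) : ∀ r, Measure.map g^[r] m = m := by
  intro r
  induction r with
  | zero => simp [Measure.map_id]
  | succ r ih =>
    rw [Function.iterate_succ']
    rw [← Measure.map_map hg (hg.iterate r), ih, h]

lemma negMulLog_invL (L : ℕ) : Real.negMulLog ((L:ℝ)⁻¹) = (L:ℝ)⁻¹ * Real.log L := by
  rw [Real.negMulLog, Real.log_inv]; ring

/-- the two-sided comparison of `H_ν` with the average of the `H_{μ_i}`. -/
lemma partH_avg_bounds (f : X → X) (hfm : Measurable f) (L : ℕ) (hL : 0 < L)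
    (μ ν : Measure X) [IsProbabilityMeasure μ]
    (hν : ν = (L : ℝ≥0∞)⁻¹ • ∑ i ∈ Finset.range L, Measure.map f^[i] μ)
    {ι : Type*} [Fintype ι] (A : ι → Set X) (hAm : ∀ i, MeasurableSet (A i))
    (hAd : Pairwise (Function.onFun Disjoint A)) :
    (L:ℝ)⁻¹ * (∑ i ∈ Finset.range L, partH (Measure.map f^[i] μ) A) ≤ partH ν A ∧
      partH ν A ≤ (L:ℝ)⁻¹ * (∑ i ∈ Finset.range L, partH (Measure.map f^[i] μ) A)
        + Real.log L := by
  have hLR : (0:ℝ) < L := by exact_mod_cast hL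
  haveI : ∀ i : ℕ, IsProbabilityMeasure (Measure.map f^[i] μ) :=
    fun i => Measure.isProbabilityMeasure_map (hfm.iterate i).aemeasurable
  set q : ℕ → ι → ℝ := fun i S => ((Measure.map f^[i] μ) (A S)).toReal with hq
  have hq0 : ∀ i S, 0 ≤ q i S := fun i S => ENNReal.toReal_nonneg
  have hmass : ∀ S, (ν (A S)).toReal = ∑ i ∈ Finset.range L, (L:ℝ)⁻¹ * q i S := by
    intro S
    rw [hν]
    rw [Measure.smul_apply, Measure.finset_sum_apply, smul_eq_mul, ENNReal.toReal_mul,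
      ENNReal.toReal_sum (fun i _ => measure_ne_top _ _), Finset.mul_sum]
    simp [ENNReal.toReal_inv, hq]
  constructor
  · -- lower bound from concavity (Jensen)
    have hjen : ∀ S : ι, ∑ i ∈ Finset.range L, (L:ℝ)⁻¹ * Real.negMulLog (q i S)
        ≤ Real.negMulLog ((ν (A S)).toReal) := by
      intro S
      have h := Real.concaveOn_negMulLog.le_map_sum (t := Finset.range L)
        (w := fun _ => (L:ℝ)⁻¹) (p := fun i => q i S)
        (fun i _ => by positivity)
        (by
          rw [Finset.sum_const, Finset.card_range, nsmul_eq_mul]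
          field_simp)
        (fun i _ => hq0 i S)
      rw [hmass S]
      simpa [smul_eq_mul] using h
    calc (L:ℝ)⁻¹ * (∑ i ∈ Finset.range L, partH (Measure.map f^[i] μ) A)
        = ∑ S : ι, ∑ i ∈ Finset.range L, (L:ℝ)⁻¹ * Real.negMulLog (q i S) := by
          rw [Finset.mul_sum]
          rw [Finset.sum_comm]
          refine Finset.sum_congr rfl fun i _ => ?_
          rw [partH, Finset.mul_sum]
      _ ≤ ∑ S : ι, Real.negMulLog ((ν (A S)).toReal) := Finset.sum_le_sum fun S _ => hjen S
      _ = partH ν A := rfl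
  · -- upper bound from subadditivity
    have hsub : ∀ S : ι, Real.negMulLog ((ν (A S)).toReal)
        ≤ ∑ i ∈ Finset.range L, (q i S * Real.negMulLog ((L:ℝ)⁻¹)
            + (L:ℝ)⁻¹ * Real.negMulLog (q i S)) := by
      intro S
      rw [hmass S]
      calc Real.negMulLog (∑ i ∈ Finset.range L, (L:ℝ)⁻¹ * q i S)
          ≤ ∑ i ∈ Finset.range L, Real.negMulLog ((L:ℝ)⁻¹ * q i S) :=
            negMulLog_sum_le _ _ (fun i _ => by positivity)
        _ = ∑ i ∈ Finset.range L, (q i S * Real.negMulLog ((L:ℝ)⁻¹)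
            + (L:ℝ)⁻¹ * Real.negMulLog (q i S)) :=
            Finset.sum_congr rfl fun i _ => Real.negMulLog_mul _ _
    have hqsum : ∀ i ∈ Finset.range L, ∑ S : ι, q i S ≤ 1 := fun i _ =>
      sum_toReal_le_one (Measure.map f^[i] μ) A hAm hAd
    calc partH ν A = ∑ S : ι, Real.negMulLog ((ν (A S)).toReal) := rfl
      _ ≤ ∑ S : ι, ∑ i ∈ Finset.range L, (q i S * Real.negMulLog ((L:ℝ)⁻¹)
            + (L:ℝ)⁻¹ * Real.negMulLog (q i S)) := Finset.sum_le_sum fun S _ => hsub S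
      _ = ∑ i ∈ Finset.range L, ((∑ S : ι, q i S) * Real.negMulLog ((L:ℝ)⁻¹)
            + (L:ℝ)⁻¹ * partH (Measure.map f^[i] μ) A) := by
          rw [Finset.sum_comm]
          refine Finset.sum_congr rfl fun i _ => ?_
          rw [Finset.sum_add_distrib, ← Finset.sum_mul, partH, Finset.mul_sum]
      _ ≤ ∑ i ∈ Finset.range L, (Real.negMulLog ((L:ℝ)⁻¹)
            + (L:ℝ)⁻¹ * partH (Measure.map f^[i] μ) A) := by
          refine Finset.sum_le_sum fun i hi => ?_
          have h1 : (∑ S : ι, q i S) * Real.negMulLog ((L:ℝ)⁻¹)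
              ≤ 1 * Real.negMulLog ((L:ℝ)⁻¹) := by
            apply mul_le_mul_of_nonneg_right (hqsum i hi)
            rw [negMulLog_invL]
            have : (0:ℝ) ≤ Real.log L := Real.log_nonneg (by exact_mod_cast hL)
            positivity
          linarith
      _ = Real.log L + (L:ℝ)⁻¹ * (∑ i ∈ Finset.range L, partH (Measure.map f^[i] μ) A) := by
          rw [Finset.sum_add_distrib, ← Finset.mul_sum, Finset.sum_const, Finset.card_range,
            nsmul_eq_mul, negMulLog_invL]
          have : (L:ℝ) * ((L:ℝ)⁻¹ * Real.log L) = Real.log L := by field_simp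
          rw [this]
      _ = _ := by ring

section Dynamics

variable {f : X → X} {k : ℕ} {P : Fin k → Set X}

lemma partH_joinPart_zero (m : Measure X) [IsProbabilityMeasure m] :
    partH m (joinPart f P 0) = 0 := by
  rw [partH]
  rw [Fintype.sum_unique]
  have : joinPart f P 0 default = Set.univ := Set.iInter_of_empty _
  rw [this]
  simp

lemma partH_joinPart_mono (m : Measure X) [IsProbabilityMeasure m]
    (hf : Measurable f) (hPm : ∀ i, MeasurableSet (P i))
    (hPd : Pairwise (Function.onFun Disjoint P)) (hPc : (⋃ i, P i) = Set.univ)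
    {p q : ℕ} (hpq : p ≤ q) :
    partH m (joinPart f P p) ≤ partH m (joinPart f P q) := by
  rw [joinPart_eq_wJoin f P p]
  exact partH_wJoin_le_joinPart m hf hPm hPd hPc (fun j : Fin p => (j:ℕ))
    Fin.val_injective (fun j => lt_of_lt_of_le j.isLt hpq)

lemma partH_joinPart_subadd (m : Measure X) [IsProbabilityMeasure m]
    (hf : Measurable f) (hPm : ∀ i, MeasurableSet (P i))
    (hPd : Pairwise (Function.onFun Disjoint P)) (hPc : (⋃ i, P i) = Set.univ)
    (p q : ℕ) (hp : Measure.map f^[p] m = m) :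
    partH m (joinPart f P (p + q)) ≤ partH m (joinPart f P p) + partH m (joinPart f P q) := by
  have h1 := partH_joinPart_split m hf hPm hPd hPc p q
  have h2 : partH m (wJoin f P (fun j : Fin q => p + (j:ℕ))) = partH m (joinPart f P q) := by
    rw [joinPart_eq_wJoin f P q, ← partH_wJoin_shift hf hPm m p (fun j : Fin q => (j:ℕ)), hp]
  linarith

lemma partH_joinPart_iter (m : Measure X) [IsProbabilityMeasure m]
    (hf : Measurable f) (hPm : ∀ i, MeasurableSet (P i))
    (hPd : Pairwise (Function.onFun Disjoint P)) (hPc : (⋃ i, P i) = Set.univ)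
    (M : ℕ) (hM : Measure.map f^[M] m = m) (r : ℕ) :
    partH m (joinPart f P (r * M)) ≤ r * partH m (joinPart f P M) := by
  induction r with
  | zero => rw [Nat.zero_mul, partH_joinPart_zero m]; simp
  | succ r ih =>
    have hmap : Measure.map f^[r * M] m = m := by
      have hit : f^[r * M] = (f^[M])^[r] := by rw [Nat.mul_comm]; exact Function.iterate_mul f M r
      rw [hit]; exact map_iterate_eq (hf.iterate M) hM r
    have h1 : partH m (joinPart f P ((r+1) * M)) = partH m (joinPart f P (r * M + M)) := by
      rw [Nat.succ_mul]
    have h2 := partH_joinPart_subadd m hf hPm hPd hPc (r * M) M hmap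
    rw [h1]
    push_cast
    nlinarith [h2, ih]

/-- upper key estimate:  `H_ν(P₀ⁿ) ≤ H_μ(P₀^{n+L}) + log L`. -/
lemma key_up (hfm : Measurable f) (L : ℕ) (hL : 0 < L)
    (μ ν : Measure X) [IsProbabilityMeasure μ]
    (hν : ν = (L : ℝ≥0∞)⁻¹ • ∑ i ∈ Finset.range L, Measure.map f^[i] μ)
    (hPm : ∀ i, MeasurableSet (P i)) (hPd : Pairwise (Function.onFun Disjoint P))
    (hPc : (⋃ i, P i) = Set.univ) (N : ℕ) :
    partH ν (joinPart f P N) ≤ partH μ (joinPart f P (N + L)) + Real.log L := by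
  have hLR : (0:ℝ) < L := by exact_mod_cast hL
  obtain ⟨_, hup⟩ := partH_avg_bounds f hfm L hL μ ν hν (joinPart f P N)
    (fun s => wJoin_measurable hfm hPm _ s) (wJoin_disjoint hPd _)
  refine le_trans hup ?_
  have hper : ∀ i ∈ Finset.range L, partH (Measure.map f^[i] μ) (joinPart f P N)
      ≤ partH μ (joinPart f P (N + L)) := by
    intro i hi
    have hiL : i < L := Finset.mem_range.mp hi
    rw [joinPart_eq_wJoin f P N, partH_wJoin_shift hfm hPm μ i (fun j : Fin N => (j:ℕ))]
    apply partH_wJoin_le_joinPart μ hfm hPm hPd hPc (fun j : Fin N => i + (j:ℕ))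
    · intro a b hab
      exact Fin.val_injective (Nat.add_left_cancel hab)
    · intro j
      have := j.isLt
      omega
  have hsum : ∑ i ∈ Finset.range L, partH (Measure.map f^[i] μ) (joinPart f P N)
      ≤ (L:ℝ) * partH μ (joinPart f P (N + L)) := by
    calc ∑ i ∈ Finset.range L, partH (Measure.map f^[i] μ) (joinPart f P N)
        ≤ ∑ _i ∈ Finset.range L, partH μ (joinPart f P (N + L)) := Finset.sum_le_sum hper
      _ = (L:ℝ) * partH μ (joinPart f P (N + L)) := by
          rw [Finset.sum_const, Finset.card_range, nsmul_eq_mul]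
  have h3 : (L:ℝ)⁻¹ * (∑ i ∈ Finset.range L, partH (Measure.map f^[i] μ) (joinPart f P N))
      ≤ (L:ℝ)⁻¹ * ((L:ℝ) * partH μ (joinPart f P (N + L))) :=
    mul_le_mul_of_nonneg_left hsum (by positivity)
  have h4 : (L:ℝ)⁻¹ * ((L:ℝ) * partH μ (joinPart f P (N + L)))
      = partH μ (joinPart f P (N + L)) := by field_simp
  linarith

/-- lower key estimate: `H_μ(P₀^{n+L}) ≤ H_ν(P₀ⁿ) + 2(k+1)^L`. -/
lemma key_low (hfm : Measurable f) (L : ℕ) (hL : 0 < L)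
    (μ ν : Measure X) [IsProbabilityMeasure μ]
    (hν : ν = (L : ℝ≥0∞)⁻¹ • ∑ i ∈ Finset.range L, Measure.map f^[i] μ)
    (hPm : ∀ i, MeasurableSet (P i)) (hPd : Pairwise (Function.onFun Disjoint P))
    (hPc : (⋃ i, P i) = Set.univ) (N : ℕ) :
    partH μ (joinPart f P (N + L)) ≤ partH ν (joinPart f P N) + 2 * ((k:ℝ)+1)^L := by
  have hLR : (0:ℝ) < L := by exact_mod_cast hL
  haveI : ∀ i : ℕ, IsProbabilityMeasure (Measure.map f^[i] μ) :=
    fun i => Measure.isProbabilityMeasure_map (hfm.iterate i).aemeasurable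
  obtain ⟨hlow, _⟩ := partH_avg_bounds f hfm L hL μ ν hν (joinPart f P N)
    (fun s => wJoin_measurable hfm hPm _ s) (wJoin_disjoint hPd _)
  have hcardb : ∀ b : ℕ, b ≤ L → (Fintype.card (Fin b → Fin k) : ℝ) ≤ ((k:ℝ)+1)^L := by
    intro b hb
    have h1 : (Fintype.card (Fin b → Fin k) : ℝ) = ((k:ℝ))^b := by
      rw [Fintype.card_fun]
      push_cast
      simp
    rw [h1]
    calc ((k:ℝ))^b ≤ ((k:ℝ)+1)^b := by
          apply pow_le_pow_left₀ (by positivity) (by linarith)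
      _ ≤ ((k:ℝ)+1)^L := by
          apply pow_le_pow_right₀ (by push_cast; linarith [Nat.cast_nonneg (α := ℝ) k]) hb
  have hper : ∀ i ∈ Finset.range L,
      partH μ (joinPart f P (N + L)) - 2 * ((k:ℝ)+1)^L
        ≤ partH (Measure.map f^[i] μ) (joinPart f P N) := by
    intro i hi
    have hiL : i < L := Finset.mem_range.mp hi
    have hNL : N + L = i + N + (L - i) := by omega
    have hshift : partH (Measure.map f^[i] μ) (joinPart f P N)
        = partH μ (wJoin f P (fun j : Fin N => i + (j:ℕ))) := by
      rw [joinPart_eq_wJoin f P N, partH_wJoin_shift hfm hPm μ i (fun j : Fin N => (j:ℕ))]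
    have hsplit1 := partH_joinPart_split μ hfm hPm hPd hPc (i + N) (L - i)
    have hsplit2 := partH_joinPart_split μ hfm hPm hPd hPc i N
    have hbound1 : partH μ (joinPart f P i) ≤ ((k:ℝ)+1)^L :=
      le_trans (partH_le_card μ _) (hcardb i (by omega))
    have hbound2 : partH μ (wJoin f P (fun j : Fin (L - i) => (i + N) + (j:ℕ)))
        ≤ ((k:ℝ)+1)^L :=
      le_trans (partH_le_card μ _) (hcardb (L - i) (by omega))
    rw [hNL, hshift]
    have hmid : partH μ (joinPart f P (i + N))
        ≤ ((k:ℝ)+1)^L + partH μ (wJoin f P (fun j : Fin N => i + (j:ℕ))) := by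
      linarith
    linarith
  have hsum : (L:ℝ) * (partH μ (joinPart f P (N + L)) - 2 * ((k:ℝ)+1)^L)
      ≤ ∑ i ∈ Finset.range L, partH (Measure.map f^[i] μ) (joinPart f P N) := by
    calc (L:ℝ) * (partH μ (joinPart f P (N + L)) - 2 * ((k:ℝ)+1)^L)
        = ∑ _i ∈ Finset.range L, (partH μ (joinPart f P (N + L)) - 2 * ((k:ℝ)+1)^L) := by
          rw [Finset.sum_const, Finset.card_range, nsmul_eq_mul]
      _ ≤ _ := Finset.sum_le_sum hper
  have h3 : (L:ℝ)⁻¹ * ((L:ℝ) * (partH μ (joinPart f P (N + L)) - 2 * ((k:ℝ)+1)^L))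
      ≤ (L:ℝ)⁻¹ * ∑ i ∈ Finset.range L, partH (Measure.map f^[i] μ) (joinPart f P N) :=
    mul_le_mul_of_nonneg_left hsum (by positivity)
  have h4 : (L:ℝ)⁻¹ * ((L:ℝ) * (partH μ (joinPart f P (N + L)) - 2 * ((k:ℝ)+1)^L))
      = partH μ (joinPart f P (N + L)) - 2 * ((k:ℝ)+1)^L := by field_simp
  linarith

/-- the join for `f^[L]` with window positions `L*m`. -/
lemma partH_joinPart_iterate_eq (m : Measure X) (L : ℕ) {k' : ℕ} (Q : Fin k' → Set X)
    (n : ℕ) :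
    partH m (joinPart f^[L] Q n) = partH m (wJoin f Q (fun m' : Fin n => L * (m' : ℕ))) := by
  refine Finset.sum_congr rfl fun s _ => ?_
  have : joinPart f^[L] Q n s = wJoin f Q (fun m' : Fin n => L * (m' : ℕ)) s := by
    rw [joinPart, wJoin]
    exact Set.iInter_congr fun j => by rw [Function.iterate_mul]
  rw [this]

/-- the canonical equivalence `Fin (k^L) ≃ (Fin L → Fin k)`. -/
noncomputable def pEquiv (k L : ℕ) : Fin (k ^ L) ≃ (Fin L → Fin k) :=
  (Fintype.equivFinOfCardEq (by simp [Fintype.card_fun])).symm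

/-- identity: the `n`-join of `f^[L]` w.r.t. the `L`-join partition is the `nL`-join. -/
lemma partH_joinPart_pow (m : Measure X) (n L : ℕ) :
    partH m (joinPart f^[L] ((joinPart f P L) ∘ ⇑(pEquiv k L)) n)
      = partH m (joinPart f P (n * L)) := by
  classical
  set E := pEquiv k L with hE
  set e₀ : Fin n × Fin L → ℕ := fun q => (q.2 : ℕ) + L * (q.1 : ℕ) with he₀
  set Ψ : (Fin n → Fin (k ^ L)) ≃ (Fin n × Fin L → Fin k) :=
    ((Equiv.refl (Fin n)).arrowCongr E).trans (Equiv.curry (Fin n) (Fin L) (Fin k)).symm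
    with hΨdef
  have hΨ : ∀ (s : Fin n → Fin (k ^ L)) (q : Fin n × Fin L), Ψ s q = E (s q.1) q.2 := by
    intro s q
    simp [hΨdef, Equiv.curry, Equiv.arrowCongr, Function.uncurry]
  have hcell : ∀ s, joinPart f^[L] ((joinPart f P L) ∘ ⇑E) n s = wJoin f P e₀ (Ψ s) := by
    intro s
    ext x
    simp only [joinPart, wJoin, Set.mem_iInter, Set.mem_preimage, Function.comp_apply]
    constructor
    · intro h q
      have h1 := h q.1 q.2
      rw [hΨ s q]
      rw [he₀]
      have h2 : f^[(q.2:ℕ) + L * (q.1:ℕ)] x = f^[(q.2:ℕ)] ((f^[L])^[(q.1:ℕ)] x) := by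
        rw [← Function.iterate_mul, ← Function.iterate_add_apply]
      rw [h2]
      exact h1
    · intro h j j₂
      have h1 := h (j, j₂)
      rw [hΨ s (j, j₂)] at h1
      have h2 : f^[(j₂:ℕ) + L * (j:ℕ)] x = f^[(j₂:ℕ)] ((f^[L])^[(j:ℕ)] x) := by
        rw [← Function.iterate_mul, ← Function.iterate_add_apply]
      rw [he₀] at h1
      simp only at h1
      rw [h2] at h1
      exact h1
  have hstep1 : partH m (joinPart f^[L] ((joinPart f P L) ∘ ⇑E) n)
      = partH m ((wJoin f P e₀) ∘ ⇑Ψ) :=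
    Finset.sum_congr rfl fun s _ => by rw [hcell s]; rfl
  rw [hstep1, partH_comp_equiv m _ Ψ]
  rw [joinPart_eq_wJoin f P (n * L)]
  have hco : (fun t : Fin (n * L) => (t : ℕ)) ∘ ⇑(finProdFinEquiv : Fin n × Fin L ≃ Fin (n * L))
      = e₀ := by
    funext q
    simp [he₀, finProdFinEquiv]
  rw [← hco]
  exact partH_wJoin_reindex m finProdFinEquiv _

end Dynamics


section Entropy

variable {f : X → X} {k : ℕ}

lemma entropy_bddBelow (m : Measure X) [IsProbabilityMeasure m] (T : X → X)
    (P : Fin k → Set X) :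
    BddBelow (Set.range fun n : ℕ => partH m (joinPart T P (n + 1)) / (n + 1)) := by
  refine ⟨0, ?_⟩
  rintro x ⟨n, rfl⟩
  have h1 : (0:ℝ) ≤ partH m (joinPart T P (n + 1)) := partH_nonneg m _
  positivity

lemma entropyOfPart_nonneg (m : Measure X) [IsProbabilityMeasure m] (T : X → X)
    (P : Fin k → Set X) : 0 ≤ entropyOfPart m T P := by
  apply le_ciInf
  intro n
  have h1 : (0:ℝ) ≤ partH m (joinPart T P (n + 1)) := partH_nonneg m _
  positivity

/-- the `≤` half of the entropy formula, partition-wise. -/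
lemma entropy_le_aux (hfm : Measurable f) (L : ℕ) (hL : 0 < L)
    (μ ν : Measure X) [IsProbabilityMeasure μ] [IsProbabilityMeasure ν]
    (hν : ν = (L : ℝ≥0∞)⁻¹ • ∑ i ∈ Finset.range L, Measure.map f^[i] μ)
    (hmapL : Measure.map f^[L] μ = μ)
    (P : Fin k → Set X) (hPm : ∀ i, MeasurableSet (P i))
    (hPd : Pairwise (Function.onFun Disjoint P)) (hPc : (⋃ i, P i) = Set.univ) :
    entropyOfPart ν f P ≤ (L:ℝ)⁻¹ * entropyOfPart μ f^[L] ((joinPart f P L) ∘ ⇑(pEquiv k L)) := by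
  have hLR : (0:ℝ) < L := by exact_mod_cast hL
  have hEQ : entropyOfPart μ f^[L] ((joinPart f P L) ∘ ⇑(pEquiv k L))
      = ⨅ n : ℕ, partH μ (joinPart f P ((n + 1) * L)) / (n + 1) := by
    rw [entropyOfPart]
    exact iInf_congr fun n => by rw [partH_joinPart_pow]
  suffices hmain : ∀ m' : ℕ, (L:ℝ) * entropyOfPart ν f P
      ≤ partH μ (joinPart f P ((m' + 1) * L)) / (m' + 1) by
    have h5 : (L:ℝ) * entropyOfPart ν f P
        ≤ ⨅ n : ℕ, partH μ (joinPart f P ((n + 1) * L)) / (n + 1) := le_ciInf hmain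
    rw [hEQ]
    calc entropyOfPart ν f P = (L:ℝ)⁻¹ * ((L:ℝ) * entropyOfPart ν f P) := by field_simp
      _ ≤ _ := mul_le_mul_of_nonneg_left h5 (by positivity)
  intro m'
  set m₁ : ℕ := m' + 1 with hm₁
  set a : ℝ := partH μ (joinPart f P (m₁ * L)) with ha
  have ha0 : 0 ≤ a := partH_nonneg μ _
  have hm₁1 : 1 ≤ m₁ := Nat.le_add_left 1 m'
  have hmapM : Measure.map f^[m₁ * L] μ = μ := by
    rw [Nat.mul_comm, Function.iterate_mul]
    exact map_iterate_eq (hfm.iterate L) hmapL m₁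
  have hbound : ∀ r : ℕ, 2 ≤ r → entropyOfPart ν f P
      ≤ ((r:ℝ) * a + Real.log L) / ((((r * m₁ - 1) * L : ℕ)) : ℝ) := by
    intro r hr
    set N' : ℕ := r * m₁ - 1 with hN'
    have hrm : 2 ≤ r * m₁ := le_trans hr (Nat.le_mul_of_pos_right r (by omega))
    have hN'1 : 1 ≤ N' := by omega
    have hNL1 : 1 ≤ N' * L := by
      calc 1 = 1 * 1 := by ring
        _ ≤ N' * L := Nat.mul_le_mul hN'1 hL
    have hidx : N' * L - 1 + 1 = N' * L := by omega
    have step0 : entropyOfPart ν f P ≤ partH ν (joinPart f P (N' * L)) / ((N' * L : ℕ) : ℝ) := by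
      have hc := ciInf_le (entropy_bddBelow ν f P) (N' * L - 1)
      rw [hidx] at hc
      have hcast : (((N' * L - 1 : ℕ)) : ℝ) + 1 = ((N' * L : ℕ) : ℝ) := by
        have := congrArg (Nat.cast : ℕ → ℝ) hidx
        push_cast at this ⊢
        linarith
      rwa [hcast] at hc
    have hch1 := key_up hfm L hL μ ν hν hPm hPd hPc (N' * L)
    have heq2 : N' * L + L = r * (m₁ * L) := by
      have hsub : N' + 1 = r * m₁ := by omega
      calc N' * L + L = (N' + 1) * L := by ring
        _ = (r * m₁) * L := by rw [hsub]
        _ = r * (m₁ * L) := by ring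
    have hch2 : partH μ (joinPart f P (r * (m₁ * L))) ≤ r * a :=
      partH_joinPart_iter μ hfm hPm hPd hPc (m₁ * L) hmapM r
    have hnum : partH ν (joinPart f P (N' * L)) ≤ (r:ℝ) * a + Real.log L := by
      rw [heq2] at hch1
      linarith
    have hden : (0:ℝ) < ((N' * L : ℕ) : ℝ) := by exact_mod_cast hNL1
    calc entropyOfPart ν f P ≤ partH ν (joinPart f P (N' * L)) / ((N' * L : ℕ) : ℝ) := step0
      _ ≤ ((r:ℝ) * a + Real.log L) / ((N' * L : ℕ) : ℝ) := by gcongr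
  -- limit as r → ∞
  have hlim : Tendsto (fun r : ℕ => ((r:ℝ) * a + Real.log L) / ((((r * m₁ - 1) * L : ℕ)) : ℝ))
      atTop (𝓝 (a / ((m₁ : ℝ) * L))) := by
    have h1 : Tendsto (fun r : ℕ => (a + Real.log L * (1 / (r:ℝ)))
        / (((m₁:ℝ) - 1 / (r:ℝ)) * L)) atTop (𝓝 ((a + Real.log L * 0) / (((m₁:ℝ) - 0) * L))) := by
      apply Tendsto.div
      · exact tendsto_const_nhds.add (tendsto_const_nhds.mul tendsto_one_div_atTop_nhds_zero_nat)
      · exact (tendsto_const_nhds.sub tendsto_one_div_atTop_nhds_zero_nat).mul tendsto_const_nhds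
      · have hm₁R : (1:ℝ) ≤ (m₁:ℝ) := by exact_mod_cast hm₁1
        have : (0:ℝ) < ((m₁:ℝ) - 0) * L := by
          rw [sub_zero]
          exact mul_pos (by linarith) hLR
        exact ne_of_gt this
    have h2 : (a + Real.log L * 0) / (((m₁:ℝ) - 0) * L) = a / ((m₁:ℝ) * L) := by
      norm_num
    rw [h2] at h1
    apply h1.congr'
    filter_upwards [eventually_ge_atTop 2] with r hr
    have hrR : (2:ℝ) ≤ (r:ℝ) := by exact_mod_cast hr
    have hm₁R : (1:ℝ) ≤ (m₁:ℝ) := by exact_mod_cast hm₁1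
    have hrm : 1 ≤ r * m₁ := by
      have := Nat.le_mul_of_pos_right r (show 0 < m₁ by omega)
      omega
    have hc : ((((r * m₁ - 1) * L : ℕ)) : ℝ) = ((r:ℝ) * (m₁:ℝ) - 1) * (L:ℝ) := by
      push_cast [Nat.cast_sub hrm]
      ring
    rw [hc]
    have hr0 : (r:ℝ) ≠ 0 := by linarith
    have hrm1 : (0:ℝ) < (r:ℝ) * (m₁:ℝ) - 1 := by nlinarith
    have hden1 : (0:ℝ) < (m₁:ℝ) - 1 / (r:ℝ) := by
      have h3 : 1 / (r:ℝ) ≤ 1 / 2 := one_div_le_one_div_of_le (by linarith) (by linarith)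
      linarith
    have hne1 : ((m₁:ℝ) - 1 / (r:ℝ)) ≠ 0 := ne_of_gt hden1
    have hne2 : ((r:ℝ) * (m₁:ℝ) - 1) ≠ 0 := ne_of_gt hrm1
    have hLne : (L:ℝ) ≠ 0 := ne_of_gt hLR
    rw [div_eq_div_iff (by exact ne_of_gt (mul_pos hden1 hLR)) (by exact ne_of_gt (mul_pos hrm1 hLR))]
    field_simp
  have hfin : entropyOfPart ν f P ≤ a / ((m₁:ℝ) * L) := by
    apply ge_of_tendsto hlim
    filter_upwards [eventually_ge_atTop 2] with r hr
    exact hbound r hr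
  have hgoal : (L:ℝ) * (a / ((m₁:ℝ) * L)) = a / (m₁:ℝ) := by
    have hm₁R : (0:ℝ) < (m₁:ℝ) := by exact_mod_cast hm₁1
    field_simp
  calc (L:ℝ) * entropyOfPart ν f P ≤ (L:ℝ) * (a / ((m₁:ℝ) * L)) :=
        mul_le_mul_of_nonneg_left hfin (by positivity)
    _ = a / (m₁:ℝ) := hgoal
    _ = partH μ (joinPart f P ((m' + 1) * L)) / ((m':ℝ) + 1) := by
        rw [ha, hm₁]
        push_cast
        ring_nf

/-- the `≥` half of the entropy formula, partition-wise. -/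
lemma entropy_ge_aux (hfm : Measurable f) (L : ℕ) (hL : 0 < L)
    (μ ν : Measure X) [IsProbabilityMeasure μ] [IsProbabilityMeasure ν]
    (hν : ν = (L : ℝ≥0∞)⁻¹ • ∑ i ∈ Finset.range L, Measure.map f^[i] μ)
    (hmapν : Measure.map f ν = ν)
    (Q : Fin k → Set X) (hQm : ∀ i, MeasurableSet (Q i))
    (hQd : Pairwise (Function.onFun Disjoint Q)) (hQc : (⋃ i, Q i) = Set.univ) :
    entropyOfPart μ f^[L] Q ≤ (L:ℝ) * entropyOfPart ν f Q := by
  have hLR : (0:ℝ) < L := by exact_mod_cast hL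
  set C : ℝ := 2 * ((k:ℝ)+1)^L with hC
  have hC0 : 0 ≤ C := by positivity
  suffices hmain : ∀ N : ℕ, (L:ℝ)⁻¹ * entropyOfPart μ f^[L] Q
      ≤ partH ν (joinPart f Q (N + 1)) / ((N:ℝ) + 1) by
    have h5 : (L:ℝ)⁻¹ * entropyOfPart μ f^[L] Q ≤ entropyOfPart ν f Q := by
      rw [entropyOfPart]
      exact le_ciInf hmain
    calc entropyOfPart μ f^[L] Q = (L:ℝ) * ((L:ℝ)⁻¹ * entropyOfPart μ f^[L] Q) := by
          field_simp
      _ ≤ (L:ℝ) * entropyOfPart ν f Q := mul_le_mul_of_nonneg_left h5 (by positivity)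
  intro N
  set N₁ : ℕ := N + 1 with hN₁
  have hN₁1 : 1 ≤ N₁ := Nat.le_add_left 1 N
  set b : ℝ := partH ν (joinPart f Q N₁) with hb
  have hb0 : 0 ≤ b := partH_nonneg ν _
  have hmapN : Measure.map f^[N₁] ν = ν := map_iterate_eq hfm hmapν N₁
  have hbound : ∀ r : ℕ, 1 ≤ r → entropyOfPart μ f^[L] Q
      ≤ ((r:ℝ) * b + C) * (L:ℝ) / ((r:ℝ) * (N₁:ℝ)) := by
    intro r hr
    set nr : ℕ := r * N₁ / L + 1 with hnr
    have hnr1 : 1 ≤ nr := Nat.le_add_left 1 _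
    have hub : nr * L ≤ r * N₁ + L := by
      rw [Nat.succ_mul]
      exact Nat.add_le_add_right (Nat.div_mul_le_self _ _) L
    have hlbs : r * N₁ < nr * L := by
      have h2 : r * N₁ % L < L := Nat.mod_lt _ hL
      have h3 : L * (r * N₁ / L) + r * N₁ % L = r * N₁ := Nat.div_add_mod _ _
      calc r * N₁ = L * (r * N₁ / L) + r * N₁ % L := h3.symm
        _ < L * (r * N₁ / L) + L := by omega
        _ = nr * L := by rw [Nat.succ_mul, Nat.mul_comm]
    -- step 0 : infimum bound
    have hidx : nr - 1 + 1 = nr := by omega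
    have step0 : entropyOfPart μ f^[L] Q
        ≤ partH μ (joinPart f^[L] Q nr) / ((nr:ℕ) : ℝ) := by
      have hc := ciInf_le (entropy_bddBelow μ f^[L] Q) (nr - 1)
      rw [hidx] at hc
      have hcast : (((nr - 1 : ℕ)) : ℝ) + 1 = ((nr : ℕ) : ℝ) := by
        have := congrArg (Nat.cast : ℕ → ℝ) hidx
        push_cast at this ⊢
        linarith
      rwa [hcast] at hc
    -- chain of estimates on the numerator
    have hch1 : partH μ (joinPart f^[L] Q nr) ≤ partH μ (joinPart f Q (nr * L)) := by
      rw [partH_joinPart_iterate_eq μ L Q nr]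
      apply partH_wJoin_le_joinPart μ hfm hQm hQd hQc (fun m' : Fin nr => L * (m' : ℕ))
      · intro a b hab
        exact Fin.val_injective (Nat.eq_of_mul_eq_mul_left hL hab)
      · intro j
        rw [Nat.mul_comm nr L]
        exact mul_lt_mul_of_pos_left j.isLt hL
    have hch2 : partH μ (joinPart f Q (nr * L)) ≤ partH μ (joinPart f Q (r * N₁ + L)) :=
      partH_joinPart_mono μ hfm hQm hQd hQc hub
    have hch3 : partH μ (joinPart f Q (r * N₁ + L)) ≤ partH ν (joinPart f Q (r * N₁)) + C :=
      key_low hfm L hL μ ν hν hQm hQd hQc (r * N₁)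
    have hch4 : partH ν (joinPart f Q (r * N₁)) ≤ (r:ℝ) * b :=
      partH_joinPart_iter ν hfm hQm hQd hQc N₁ hmapN r
    have hnum : partH μ (joinPart f^[L] Q nr) ≤ (r:ℝ) * b + C := by linarith
    have hnrpos : (0:ℝ) < ((nr:ℕ):ℝ) := by exact_mod_cast hnr1
    have hrN₁pos : (0:ℝ) < (r:ℝ) * (N₁:ℝ) := by
      have h1 : (1:ℝ) ≤ (r:ℝ) := by exact_mod_cast hr
      have h2 : (1:ℝ) ≤ (N₁:ℝ) := by exact_mod_cast hN₁1
      nlinarith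
    have hdenc : (r:ℝ) * (N₁:ℝ) / (L:ℝ) ≤ ((nr:ℕ):ℝ) := by
      rw [div_le_iff₀ hLR]
      have := hlbs.le
      exact_mod_cast this
    calc entropyOfPart μ f^[L] Q ≤ partH μ (joinPart f^[L] Q nr) / ((nr:ℕ):ℝ) := step0
      _ ≤ ((r:ℝ) * b + C) / ((nr:ℕ):ℝ) := by gcongr
      _ ≤ ((r:ℝ) * b + C) / ((r:ℝ) * (N₁:ℝ) / (L:ℝ)) := by
          apply div_le_div_of_nonneg_left (by positivity) (by positivity) hdenc
      _ = ((r:ℝ) * b + C) * (L:ℝ) / ((r:ℝ) * (N₁:ℝ)) := by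
          rw [div_div_eq_mul_div]
  -- limit as r → ∞
  have hlim : Tendsto (fun r : ℕ => ((r:ℝ) * b + C) * (L:ℝ) / ((r:ℝ) * (N₁:ℝ)))
      atTop (𝓝 (b * (L:ℝ) / (N₁:ℝ))) := by
    have hN₁R : (1:ℝ) ≤ (N₁:ℝ) := by exact_mod_cast hN₁1
    have h1 : Tendsto (fun r : ℕ => (b + C * (1 / (r:ℝ))) * (L:ℝ) / (N₁:ℝ))
        atTop (𝓝 ((b + C * 0) * (L:ℝ) / (N₁:ℝ))) := by
      apply Tendsto.div
      · exact ((tendsto_const_nhds.add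
          (tendsto_const_nhds.mul tendsto_one_div_atTop_nhds_zero_nat)).mul tendsto_const_nhds)
      · exact tendsto_const_nhds
      · exact ne_of_gt (by linarith)
    have h2 : (b + C * 0) * (L:ℝ) / (N₁:ℝ) = b * (L:ℝ) / (N₁:ℝ) := by norm_num
    rw [h2] at h1
    apply h1.congr'
    filter_upwards [eventually_ge_atTop 1] with r hr
    have hr0 : (0:ℝ) < (r:ℝ) := by exact_mod_cast hr
    rw [div_eq_div_iff (by positivity) (by positivity)]
    field_simp
  have hfin : entropyOfPart μ f^[L] Q ≤ b * (L:ℝ) / (N₁:ℝ) := by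
    apply ge_of_tendsto hlim
    filter_upwards [eventually_ge_atTop 1] with r hr
    exact hbound r hr
  have hN₁R : (0:ℝ) < (N₁:ℝ) := by exact_mod_cast hN₁1
  have hgoal : (L:ℝ)⁻¹ * (b * (L:ℝ) / (N₁:ℝ)) = b / (N₁:ℝ) := by
    field_simp
  calc (L:ℝ)⁻¹ * entropyOfPart μ f^[L] Q ≤ (L:ℝ)⁻¹ * (b * (L:ℝ) / (N₁:ℝ)) :=
        mul_le_mul_of_nonneg_left hfin (by positivity)
    _ = b / (N₁:ℝ) := hgoal
    _ = partH ν (joinPart f Q (N + 1)) / ((N:ℝ) + 1) := by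
        rw [hb, hN₁]
        push_cast
        ring_nf

end Entropy

end AME

open AME

/-- If `μ` is an ergodic `f^L`-invariant Borel probability measure and
`ν := (1/L) ∑_{i=0}^{L-1} μ ∘ f^{-i}`, then `ν` is an `f`-invariant (indeed ergodic)
Borel probability measure and `h_ν(f) = (1/L)·h_μ(f^L)`. -/
theorem average_measure_ergodic_entropy
    {X : Type*} [MetricSpace X] [CompactSpace X] [MeasurableSpace X] [BorelSpace X]
    (f : X → X) (hf : Continuous f) (L : ℕ) (hL : 0 < L)
    (μ : Measure X) [IsProbabilityMeasure μ] (hμ : Ergodic f^[L] μ)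
    (ν : Measure X)
    (hν : ν = (L : ℝ≥0∞)⁻¹ • ∑ i ∈ Finset.range L, Measure.map f^[i] μ) :
    IsProbabilityMeasure ν ∧ Ergodic f ν ∧
      metricEntropy ν f = (L : ℝ≥0∞)⁻¹ * metricEntropy μ f^[L] := by
  have hfm : Measurable f := hf.measurable
  have hL0 : (L : ℝ≥0∞) ≠ 0 := Nat.cast_ne_zero.mpr hL.ne' 
  have hLtop : (L : ℝ≥0∞) ≠ ⊤ := ENNReal.natCast_ne_top L
  haveI hprobi : ∀ i : ℕ, IsProbabilityMeasure (Measure.map f^[i] μ) :=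
    fun i => Measure.isProbabilityMeasure_map (hfm.iterate i).aemeasurable
  have hmapL : Measure.map f^[L] μ = μ := hμ.toMeasurePreserving.map_eq
  have hiter : ∀ (i : ℕ) (s : Set X), MeasurableSet s →
      (Measure.map f^[i] μ) s = μ (f^[i] ⁻¹' s) :=
    fun i s hs => Measure.map_apply (hfm.iterate i) hs
  -- probability
  have hprobν : IsProbabilityMeasure ν := by
    constructor
    rw [hν, Measure.smul_apply, Measure.finset_sum_apply, smul_eq_mul]
    have h1 : ∀ i ∈ Finset.range L, (Measure.map f^[i] μ) Set.univ = 1 :=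
      fun i _ => measure_univ
    rw [Finset.sum_congr rfl h1, Finset.sum_const, Finset.card_range, nsmul_eq_mul, mul_one]
    exact ENNReal.inv_mul_cancel hL0 hLtop
  -- invariance
  have hmapν : Measure.map f ν = ν := by
    ext s hs
    rw [Measure.map_apply hfm hs, hν, Measure.smul_apply, Measure.smul_apply,
      Measure.finset_sum_apply, Measure.finset_sum_apply]
    congr 1
    have hterm : ∀ i : ℕ, (Measure.map f^[i] μ) (f ⁻¹' s) = μ (f^[i+1] ⁻¹' s) := by
      intro i
      rw [hiter i _ (hfm hs)]
      congr 1
      rw [← Set.preimage_comp, ← Function.iterate_succ']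
    have hL' : μ (f^[L] ⁻¹' s) = μ (f^[0] ⁻¹' s) := by
      have h2 := hiter L s hs
      rw [hmapL] at h2
      simp [← h2]
    calc ∑ i ∈ Finset.range L, (Measure.map f^[i] μ) (f ⁻¹' s)
        = ∑ i ∈ Finset.range L, μ (f^[i+1] ⁻¹' s) :=
          Finset.sum_congr rfl fun i _ => hterm i
      _ = ∑ i ∈ Finset.range L, μ (f^[i] ⁻¹' s) := by
          have h1 : ∑ i ∈ Finset.range (L+1), μ (f^[i] ⁻¹' s)
              = (∑ i ∈ Finset.range L, μ (f^[i+1] ⁻¹' s)) + μ (f^[0] ⁻¹' s) :=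
            Finset.sum_range_succ' _ L
          have h2 : ∑ i ∈ Finset.range (L+1), μ (f^[i] ⁻¹' s)
              = (∑ i ∈ Finset.range L, μ (f^[i] ⁻¹' s)) + μ (f^[L] ⁻¹' s) :=
            Finset.sum_range_succ _ L
          rw [hL'] at h2
          have h3 := h1.symm.trans h2
          exact (ENNReal.add_left_inj (measure_ne_top μ _)).mp h3
      _ = ∑ i ∈ Finset.range L, (Measure.map f^[i] μ) s :=
          Finset.sum_congr rfl fun i _ => (hiter i s hs).symm
  -- ergodicity
  have hergν : Ergodic f ν := by
    refine ⟨⟨hfm, hmapν⟩, ⟨?_⟩⟩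
    intro s hsm hsf
    have hsit : ∀ i : ℕ, f^[i] ⁻¹' s = s := by
      intro i
      rw [Set.preimage_iterate_eq]
      exact Function.iterate_fixed hsf i
    have hνeq : ∀ t : Set X, MeasurableSet t → (∀ i : ℕ, f^[i] ⁻¹' t = t) → ν t = μ t := by
      intro t htm ht
      rw [hν, Measure.smul_apply, Measure.finset_sum_apply, smul_eq_mul]
      have h1 : ∀ i ∈ Finset.range L, (Measure.map f^[i] μ) t = μ t := by
        intro i _
        rw [hiter i t htm, ht i]
      rw [Finset.sum_congr rfl h1, Finset.sum_const, Finset.card_range, nsmul_eq_mul,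
        ← mul_assoc, ENNReal.inv_mul_cancel hL0 hLtop, one_mul]
    rw [Filter.eventuallyConst_set']
    rcases hμ.ae_empty_or_univ hsm (hsit L) with h | h
    · left
      rw [ae_eq_empty] at h ⊢
      rw [hνeq s hsm hsit]
      exact h
    · right
      rw [ae_eq_univ] at h ⊢
      have hsc : ∀ i : ℕ, f^[i] ⁻¹' sᶜ = sᶜ := by
        intro i
        rw [Set.preimage_compl, hsit i]
      rw [hνeq sᶜ hsm.compl hsc]
      exact h
  refine ⟨hprobν, hergν, ?_⟩
  haveI := hprobν
  apply le_antisymm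
  · refine iSup_le fun k => iSup_le fun P => iSup_le fun hcond => ?_
    obtain ⟨hPm, hPd, hPc⟩ := hcond
    set Q' : Fin (k ^ L) → Set X := (joinPart f P L) ∘ ⇑(pEquiv k L) with hQ'
    have hQm : ∀ i, MeasurableSet (Q' i) :=
      fun i => wJoin_measurable hfm hPm (fun t : Fin L => (t:ℕ)) _
    have hQd : Pairwise (Function.onFun Disjoint Q') :=
      fun i j hij => wJoin_disjoint hPd (fun t : Fin L => (t:ℕ))
        ((pEquiv k L).injective.ne hij)
    have hQc : (⋃ i, Q' i) = Set.univ := by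
      rw [hQ']
      rw [show (⋃ i, (joinPart f P L ∘ ⇑(pEquiv k L)) i) = ⋃ s, joinPart f P L s from
        (pEquiv k L).surjective.iUnion_comp _]
      exact wJoin_cover hPc _
    have hle := entropy_le_aux hfm L hL μ ν hν hmapL P hPm hPd hPc
    calc ENNReal.ofReal (entropyOfPart ν f P)
        ≤ ENNReal.ofReal ((L:ℝ)⁻¹ * entropyOfPart μ f^[L] Q') :=
          ENNReal.ofReal_le_ofReal hle
      _ = (L:ℝ≥0∞)⁻¹ * ENNReal.ofReal (entropyOfPart μ f^[L] Q') := by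
          rw [ENNReal.ofReal_mul (by positivity),
            ENNReal.ofReal_inv_of_pos (by exact_mod_cast hL), ENNReal.ofReal_natCast]
      _ ≤ (L:ℝ≥0∞)⁻¹ * metricEntropy μ f^[L] := by
          apply mul_le_mul_right
          apply le_iSup_of_le (k ^ L)
          apply le_iSup_of_le Q'
          exact le_iSup (fun _ : (∀ i, MeasurableSet (Q' i)) ∧
            Pairwise (Function.onFun Disjoint Q') ∧ (⋃ i, Q' i) = Set.univ =>
            ENNReal.ofReal (entropyOfPart μ f^[L] Q')) ⟨hQm, hQd, hQc⟩
  · have h1 : metricEntropy μ f^[L] ≤ (L:ℝ≥0∞) * metricEntropy ν f := by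
      refine iSup_le fun k => iSup_le fun Q => iSup_le fun hcond => ?_
      obtain ⟨hQm, hQd, hQc⟩ := hcond
      have hge := entropy_ge_aux hfm L hL μ ν hν hmapν Q hQm hQd hQc
      calc ENNReal.ofReal (entropyOfPart μ f^[L] Q)
          ≤ ENNReal.ofReal ((L:ℝ) * entropyOfPart ν f Q) := ENNReal.ofReal_le_ofReal hge
        _ = (L:ℝ≥0∞) * ENNReal.ofReal (entropyOfPart ν f Q) := by
            rw [ENNReal.ofReal_mul (by positivity), ENNReal.ofReal_natCast]
        _ ≤ (L:ℝ≥0∞) * metricEntropy ν f := by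
            apply mul_le_mul_right
            apply le_iSup_of_le k
            apply le_iSup_of_le Q
            exact le_iSup (fun _ : (∀ i, MeasurableSet (Q i)) ∧
              Pairwise (Function.onFun Disjoint Q) ∧ (⋃ i, Q i) = Set.univ =>
              ENNReal.ofReal (entropyOfPart ν f Q)) ⟨hQm, hQd, hQc⟩
    calc (L:ℝ≥0∞)⁻¹ * metricEntropy μ f^[L]
        ≤ (L:ℝ≥0∞)⁻¹ * ((L:ℝ≥0∞) * metricEntropy ν f) := mul_le_mul_right h1 _
      _ = metricEntropy ν f := by
          rw [← mul_assoc, ENNReal.inv_mul_cancel hL0 hLtop, one_mul]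
end

section
/- Let (X,f) be a dynamical system and L∈ℕ⁺. Suppose there exists a compact set Y⊂X with f^L(Y)⊂Y such that (Y,f^L) satisfies the shadowing property, X = ⋃_{i=0}^{L−1} f^i(Y), and f^i(Y) ∩ f^j(Y) = ∅ for all 0 ≤ i < j ≤ L−1. Then (X,f) satisfies the shadowing property. -/
/-- The shadowing property for the restriction of a map `f` to a subset `S`:
every `δ`-pseudo-orbit contained in `S` is `ε`-traced by a point of `S`. -/
def HasShadowingOn {X : Type*} [MetricSpace X] (f : X → X) (S : Set X) : Prop :=
  ∀ ε : ℝ, 0 < ε → ∃ δ : ℝ, 0 < δ ∧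
    ∀ x : ℕ → X, (∀ n, x n ∈ S) → (∀ n, dist (f (x n)) (x (n + 1)) < δ) →
      ∃ z ∈ S, ∀ n, dist (f^[n] z) (x n) < ε

/-- Two disjoint compact sets are at positive distance from each other. -/
lemma sep_of_compact_disjoint {X : Type*} [MetricSpace X] {s t : Set X}
    (hs : IsCompact s) (ht : IsCompact t) (hd : s ∩ t = ∅) :
    ∃ η > 0, ∀ a ∈ s, ∀ b ∈ t, η ≤ dist a b := by
  rcases s.eq_empty_or_nonempty with h | hne
  · exact ⟨1, one_pos, by simp [h]⟩
  rcases t.eq_empty_or_nonempty with h | htne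
  · exact ⟨1, one_pos, by simp [h]⟩
  obtain ⟨a₀, ha₀, hmin⟩ := hs.exists_isMinOn hne
    (Metric.continuous_infDist_pt t).continuousOn
  refine ⟨Metric.infDist a₀ t, ?_, ?_⟩
  · have ha₀t : a₀ ∉ t := by
      intro h
      have : a₀ ∈ s ∩ t := ⟨ha₀, h⟩
      simp [hd] at this
    exact (ht.isClosed.notMem_iff_infDist_pos htne).mp ha₀t
  · intro a ha b hb
    exact (isMinOn_iff.mp hmin a ha).trans (Metric.infDist_le_dist_of_mem hb)

/-- Uniform continuity of all iterates `f^[r]`, `r ≤ L`, simultaneously. -/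
lemma uc_iter {X : Type*} [MetricSpace X] [CompactSpace X] (f : X → X)
    (hf : Continuous f) :
    ∀ L : ℕ, ∀ ε : ℝ, 0 < ε → ∃ δ > 0, ∀ r ≤ L, ∀ a b : X,
      dist a b < δ → dist (f^[r] a) (f^[r] b) < ε := by
  intro L
  induction L with
  | zero =>
    intro ε hε
    refine ⟨ε, hε, ?_⟩
    intro r hr a b h
    have : r = 0 := Nat.le_zero.mp hr
    simpa [this] using h
  | succ L ih =>
    intro ε hε
    obtain ⟨δ', hδ', h'⟩ := ih ε hε
    have huc : UniformContinuous (f^[L + 1]) :=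
      CompactSpace.uniformContinuous_of_continuous (hf.iterate _)
    obtain ⟨δ'', hδ'', h''⟩ := Metric.uniformContinuous_iff.mp huc ε hε
    refine ⟨min δ' δ'', lt_min hδ' hδ'', ?_⟩
    intro r hr a b hab
    rcases Nat.lt_or_ge r (L + 1) with h | h
    · exact h' r (Nat.lt_succ_iff.mp h) a b (hab.trans_le (min_le_left _ _))
    · have hrL : r = L + 1 := le_antisymm hr h
      subst hrL
      exact h'' (hab.trans_le (min_le_right _ _))

/-- Error accumulation along a pseudo-orbit. -/
lemma accum_err {X : Type*} [MetricSpace X] (f : X → X) (L : ℕ) (ε₀ δ : ℝ)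
    (hUC : ∀ r ≤ L, ∀ a b : X, dist a b < δ → dist (f^[r] a) (f^[r] b) < ε₀)
    (x : ℕ → X) (hx : ∀ n, dist (f (x n)) (x (n + 1)) < δ) :
    ∀ r ≤ L, ∀ n, dist (f^[r] (x n)) (x (n + r)) ≤ r * ε₀ := by
  intro r
  induction r with
  | zero => intro _ n; simp
  | succ r ih =>
    intro hr n
    have h1 : dist (f^[r] (f (x n))) (f^[r] (x (n + 1))) < ε₀ :=
      hUC r (Nat.le_of_succ_le hr) _ _ (hx n)
    have h2 := ih (Nat.le_of_succ_le hr) (n + 1)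
    have key : dist (f^[r + 1] (x n)) (x (n + (r + 1)))
        ≤ dist (f^[r] (f (x n))) (f^[r] (x (n + 1)))
          + dist (f^[r] (x (n + 1))) (x (n + 1 + r)) := by
      rw [Function.iterate_succ_apply]
      have hn : n + (r + 1) = n + 1 + r := by omega
      rw [hn]
      exact dist_triangle _ _ _
    have : dist (f^[r + 1] (x n)) (x (n + (r + 1))) ≤ ε₀ + r * ε₀ := by linarith
    calc dist (f^[r + 1] (x n)) (x (n + (r + 1))) ≤ ε₀ + r * ε₀ := this
      _ = (↑(r + 1)) * ε₀ := by push_cast; ring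

/-- If `Y ⊆ X` is compact with `f^L(Y) ⊆ Y`, `(Y, f^L)` has the shadowing
property, `X = ⋃_{i=0}^{L-1} f^i(Y)` and the iterates `f^i(Y)` (`0 ≤ i ≤ L−1`) are
pairwise disjoint, then `(X, f)` has the shadowing property. -/
theorem shadowing_of_disjoint_cyclic_decomposition
    {X : Type*} [MetricSpace X] [CompactSpace X]
    (f : X → X) (hf : Continuous f) (L : ℕ) (hL : 0 < L)
    (Y : Set X) (hYc : IsCompact Y) (hYinv : f^[L] '' Y ⊆ Y)
    (hshad : HasShadowingOn (f^[L]) Y)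
    (hcover : (⋃ i ∈ Finset.range L, f^[i] '' Y) = Set.univ)
    (hdisj : ∀ i j : ℕ, i < j → j ≤ L - 1 → f^[i] '' Y ∩ f^[j] '' Y = ∅) :
    HasShadowingOn f Set.univ := by
  classical
  set C : ℕ → Set X := fun i => f^[i] '' Y with hC
  have hCc : ∀ i, IsCompact (C i) := fun i => hYc.image (hf.iterate i)
  have hC0 : C 0 = Y := by simp [hC]
  have hcov : ∀ a : X, ∃ i < L, a ∈ C i := by
    intro a
    have : a ∈ ⋃ i ∈ Finset.range L, f^[i] '' Y := hcover ▸ Set.mem_univ a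
    simpa [Finset.mem_range, hC] using this
  -- pairwise disjointness in both orders
  have hdisj' : ∀ i j : ℕ, i < L → j < L → i ≠ j → C i ∩ C j = ∅ := by
    intro i j hi hj hij
    rcases Nat.lt_or_ge i j with h | h
    · exact hdisj i j h (by omega)
    · have h' : j < i := lt_of_le_of_ne h (Ne.symm hij)
      have := hdisj j i h' (by omega)
      rw [Set.inter_comm]
      exact this
  -- a uniform separation constant
  have hpairs : ∀ i j : ℕ, ∃ η > 0,
      i < L → j < L → i ≠ j → ∀ a ∈ C i, ∀ b ∈ C j, η ≤ dist a b := by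
    intro i j
    by_cases h : i < L ∧ j < L ∧ i ≠ j
    · obtain ⟨η, hη, hsep⟩ := sep_of_compact_disjoint (hCc i) (hCc j)
        (hdisj' i j h.1 h.2.1 h.2.2)
      exact ⟨η, hη, fun _ _ _ => hsep⟩
    · exact ⟨1, one_pos, fun h1 h2 h3 => absurd ⟨h1, h2, h3⟩ h⟩
  choose η hηpos hηsep using hpairs
  obtain ⟨η0, hη0pos, hsep⟩ : ∃ η0 > 0, ∀ i j : ℕ, i < L → j < L → i ≠ j →
      ∀ a ∈ C i, ∀ b ∈ C j, η0 ≤ dist a b := by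
    have hne : ((Finset.range L) ×ˢ (Finset.range L)).Nonempty :=
      ⟨(0, 0), by simp [Finset.mem_product, hL]⟩
    refine ⟨Finset.inf' _ hne (fun p => η p.1 p.2), ?_, ?_⟩
    · exact (Finset.lt_inf'_iff _).mpr (fun p _ => hηpos p.1 p.2)
    · intro i j hi hj hij a ha b hb
      have hmem : (i, j) ∈ (Finset.range L) ×ˢ (Finset.range L) := by
        simp [Finset.mem_product, hi, hj]
      exact (Finset.inf'_le _ hmem).trans (hηsep i j hi hj hij a ha b hb)
  -- the cyclic step
  have hstep : ∀ m, m < L → ∀ a ∈ C m, f a ∈ C ((m + 1) % L) := by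
    intro m hm a ha
    obtain ⟨y, hy, rfl⟩ := ha
    rcases Nat.lt_or_ge (m + 1) L with h | h
    · have : (m + 1) % L = m + 1 := Nat.mod_eq_of_lt h
      rw [this]
      refine ⟨y, hy, ?_⟩
      simp [Function.iterate_succ_apply']
    · have hmL : m + 1 = L := by omega
      have hmod : (m + 1) % L = 0 := by rw [hmL]; exact Nat.mod_self L
      rw [hmod, hC0]
      have heq : f (f^[m] y) = f^[L] y := by
        rw [← hmL, ← Function.iterate_succ_apply' f m y]
      rw [heq]
      exact hYinv ⟨y, hy, rfl⟩
  -- main argument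
  intro ε hε
  obtain ⟨ε₂, hε₂pos, hε₂⟩ := uc_iter f hf L (ε / 2) (by positivity)
  obtain ⟨δ₁, hδ₁pos, hδ₁⟩ := hshad ε₂ hε₂pos
  have hLR : (0 : ℝ) < L := by exact_mod_cast hL
  set ε₀ : ℝ := min (ε / (2 * L)) (δ₁ / (L + 1)) with hε₀def
  have hε₀pos : 0 < ε₀ := lt_min (by positivity) (by positivity)
  obtain ⟨δa, hδapos, hδa⟩ := uc_iter f hf L ε₀ hε₀pos
  refine ⟨min δa η0, lt_min hδapos hη0pos, ?_⟩
  intro x _ hx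
  have hxδa : ∀ n, dist (f (x n)) (x (n + 1)) < δa :=
    fun n => (hx n).trans_le (min_le_left _ _)
  have hxη : ∀ n, dist (f (x n)) (x (n + 1)) < η0 :=
    fun n => (hx n).trans_le (min_le_right _ _)
  obtain ⟨i, hiL, y₀, hy₀Y, hy₀⟩ := hcov (x 0)
  -- the extended pseudo-orbit
  set x' : ℕ → X := fun n => if n < i then f^[n] y₀ else x (n - i) with hx'def
  have hx'i : ∀ n, x' (n + i) = x n := by
    intro n
    simp only [hx'def]
    rw [if_neg (by omega), Nat.add_sub_cancel]
  have hx'eq : ∀ n, n < i → x' n = f^[n] y₀ := by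
    intro n hn; simp only [hx'def]; rw [if_pos hn]
  have hx'0 : x' 0 ∈ Y := by
    rcases Nat.eq_zero_or_pos i with h | h
    · subst h
      have := hx'i 0
      simp at this
      rw [this]
      rw [← hy₀]
      simpa using hy₀Y
    · rw [hx'eq 0 h]
      simpa using hy₀Y
  have hx'errδa : ∀ n, dist (f (x' n)) (x' (n + 1)) < δa := by
    intro n
    rcases Nat.lt_or_ge n i with h | h
    · rcases Nat.lt_or_ge (n + 1) i with h1 | h1
      · rw [hx'eq n h, hx'eq (n + 1) h1, ← Function.iterate_succ_apply' f n y₀]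
        simpa using hδapos
      · have hni : n + 1 = i := by omega
        have hthis : x' (n + 1) = x 0 := by
          have := hx'i 0
          rw [hni]; simpa using this
        have h5 : f (x' n) = x 0 := by
          rw [hx'eq n h, ← Function.iterate_succ_apply' f n y₀,
            show n.succ = i by omega]
          exact hy₀
        rw [hthis, h5]
        simpa using hδapos
    · have h1 : x' n = x (n - i) := by
        simp only [hx'def]; rw [if_neg (by omega)]
      have h2 : x' (n + 1) = x (n - i + 1) := by
        simp only [hx'def]; rw [if_neg (by omega)]
        congr 1; omega
      rw [h1, h2]
      exact hxδa (n - i)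
  have hx'errη : ∀ n, dist (f (x' n)) (x' (n + 1)) < η0 := by
    intro n
    rcases Nat.lt_or_ge n i with h | h
    · rcases Nat.lt_or_ge (n + 1) i with h1 | h1
      · rw [hx'eq n h, hx'eq (n + 1) h1, ← Function.iterate_succ_apply' f n y₀]
        simpa using hη0pos
      · have hni : n + 1 = i := by omega
        have hthis : x' (n + 1) = x 0 := by
          have := hx'i 0
          rw [hni]; simpa using this
        have h5 : f (x' n) = x 0 := by
          rw [hx'eq n h, ← Function.iterate_succ_apply' f n y₀,
            show n.succ = i by omega]
          exact hy₀
        rw [hthis, h5]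
        simpa using hη0pos
    · have h1 : x' n = x (n - i) := by
        simp only [hx'def]; rw [if_neg (by omega)]
      have h2 : x' (n + 1) = x (n - i + 1) := by
        simp only [hx'def]; rw [if_neg (by omega)]
        congr 1; omega
      rw [h1, h2]
      exact hxη (n - i)
  -- cyclic membership of the extended pseudo-orbit
  have hmem : ∀ n, x' n ∈ C (n % L) := by
    intro n
    induction n with
    | zero =>
      have : (0 : ℕ) % L = 0 := Nat.zero_mod L
      rw [this, hC0]
      exact hx'0
    | succ n ih =>
      have h1 : f (x' n) ∈ C ((n % L + 1) % L) := hstep _ (Nat.mod_lt n hL) _ ih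
      have h2 : (n % L + 1) % L = (n + 1) % L := by
        conv_rhs => rw [Nat.add_mod]
        rw [Nat.add_mod (n % L) 1 L, Nat.mod_mod_of_dvd _ dvd_rfl]
      rw [h2] at h1
      obtain ⟨j, hjL, hj⟩ := hcov (x' (n + 1))
      by_cases hcase : j = (n + 1) % L
      · rw [← hcase]; exact hj
      · exfalso
        have hlt : (n + 1) % L < L := Nat.mod_lt _ hL
        have := hsep ((n + 1) % L) j hlt hjL (fun h => hcase h.symm) _ h1 _ hj
        have := hx'errη n
        linarith
  have haccum : ∀ r ≤ L, ∀ n, dist (f^[r] (x' n)) (x' (n + r)) ≤ r * ε₀ :=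
    accum_err f L ε₀ δa hδa x' hx'errδa
  -- the f^L pseudo-orbit in Y
  set g : ℕ → X := fun k => x' (k * L) with hgdef
  have hgY : ∀ k, g k ∈ Y := by
    intro k
    have := hmem (k * L)
    rw [Nat.mul_mod_left, hC0] at this
    exact this
  have hgerr : ∀ k, dist (f^[L] (g k)) (g (k + 1)) < δ₁ := by
    intro k
    have h1 : dist (f^[L] (x' (k * L))) (x' (k * L + L)) ≤ L * ε₀ :=
      haccum L le_rfl (k * L)
    have h2 : (k + 1) * L = k * L + L := by ring
    have h3 : (L : ℝ) * ε₀ ≤ L * (δ₁ / (L + 1)) := by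
      have := min_le_right (ε / (2 * L)) (δ₁ / (L + 1))
      have hLnn : (0 : ℝ) ≤ L := le_of_lt hLR
      exact mul_le_mul_of_nonneg_left this hLnn
    have h4 : (L : ℝ) * (δ₁ / (L + 1)) < δ₁ := by
      rw [mul_div_assoc']
      rw [div_lt_iff₀ (by positivity)]
      nlinarith [hδ₁pos]
    simp only [hgdef]
    rw [h2]
    linarith
  obtain ⟨z, hzY, hz⟩ := hδ₁ g hgY hgerr
  refine ⟨f^[i] z, Set.mem_univ _, ?_⟩
  intro n
  have hgoal : f^[n] (f^[i] z) = f^[n + i] z := (Function.iterate_add_apply f n i z).symm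
  rw [hgoal, ← hx'i n]
  set m := n + i with hm
  set k := m / L with hk
  set r := m % L with hr
  have hrL : r < L := Nat.mod_lt _ hL
  have hmkr : m = k * L + r := by
    rw [hk, hr, Nat.mul_comm]
    exact (Nat.div_add_mod m L).symm
  have hiter : f^[m] z = f^[r] (f^[L * k] z) := by
    rw [← Function.iterate_add_apply]
    congr 1
    rw [hmkr]; ring
  have hzk : dist (f^[L * k] z) (x' (k * L)) < ε₂ := by
    have := hz k
    rw [← Function.iterate_mul] at this
    simpa [hgdef] using this
  have h1 : dist (f^[r] (f^[L * k] z)) (f^[r] (x' (k * L))) < ε / 2 :=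
    hε₂ r hrL.le _ _ hzk
  have h2 : dist (f^[r] (x' (k * L))) (x' (k * L + r)) ≤ r * ε₀ :=
    haccum r hrL.le (k * L)
  have h3 : (r : ℝ) * ε₀ ≤ ε / 2 := by
    have hr1 : (r : ℝ) * ε₀ ≤ L * ε₀ := by
      apply mul_le_mul_of_nonneg_right _ (le_of_lt hε₀pos)
      exact_mod_cast hrL.le
    have hr2 : (L : ℝ) * ε₀ ≤ L * (ε / (2 * L)) :=
      mul_le_mul_of_nonneg_left (min_le_left _ _) (le_of_lt hLR)
    have hr3 : (L : ℝ) * (ε / (2 * L)) = ε / 2 := by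
      field_simp
    linarith
  have htri : dist (f^[m] z) (x' m)
      ≤ dist (f^[r] (f^[L * k] z)) (f^[r] (x' (k * L)))
        + dist (f^[r] (x' (k * L))) (x' (k * L + r)) := by
    rw [hiter]
    have : x' m = x' (k * L + r) := by rw [← hmkr]
    rw [this]
    exact dist_triangle _ _ _
  linarith
end

section
/- Let X := E ∪ σ(E) ⊂ {0,1,2}^ℤ as above (so in every point of X, all occurrences of the symbol 2 have positions of a single parity). Then (X,σ) does not satisfy the modified almost specification property: for any mistake function g and any function k_g, choosing α = (02)^∞ ∈ X (with α_0=0) and β = σ(α), for all sufficiently large n no point z∈X satisfies that z_0⋯z_{2n−1} differs from (02)^n in at most g(2n,ε) positions and z_{2n}⋯z_{4n−1} differs from (20)^n in at most g(2n,ε) positions. -/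
open Filter

/-- The two-sided shift map on `(Fin 3)^ℤ`. -/
def shiftZ (x : ℤ → Fin 3) : ℤ → Fin 3 := fun i => x (i + 1)

/-- With `E` the set of bi-infinite concatenations (aligned at even
positions) of the blocks `00, 01, 10, 02` and `X := E ∪ σ(E)`, the subshift `(X,σ)`
fails modified almost specification: for any mistake function `g` and any `ε > 0`,
for all large `n` no point `z ∈ X` matches `(02)^n` on positions `0,…,2n−1` up to
`g(2n,ε)` mistakes and `(20)^n` on positions `2n,…,4n−1` up to `g(2n,ε)` mistakes. -/
theorem no_modified_almost_specification
    (E X : Set (ℤ → Fin 3))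
    (hE : E = {x | ∀ k : ℤ, (x (2 * k), x (2 * k + 1)) ∈
      ({(0, 0), (0, 1), (1, 0), (0, 2)} : Set (Fin 3 × Fin 3))})
    (hX : X = E ∪ shiftZ '' E)
    (g : ℕ → ℝ → ℕ)
    (hg : ∀ ε : ℝ, 0 < ε → Tendsto (fun n : ℕ => (g n ε : ℝ) / n) atTop (nhds 0)) :
    ∀ ε : ℝ, 0 < ε → ∀ᶠ n : ℕ in atTop,
      ¬ ∃ z ∈ X,
        ((Finset.range (2 * n)).filter fun j : ℕ =>
            z (j : ℤ) ≠ if Even j then (0 : Fin 3) else 2).card ≤ g (2 * n) ε ∧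
        ((Finset.range (2 * n)).filter fun j : ℕ =>
            z ((2 * n + j : ℕ) : ℤ) ≠ if Even j then (2 : Fin 3) else 0).card ≤
          g (2 * n) ε := by
  subst hE hX
  intro ε hε
  have hmono : Tendsto (fun n : ℕ => 2 * n) atTop atTop :=
    tendsto_atTop_atTop_of_monotone (fun a b h => by omega) (fun b => ⟨b, by omega⟩)
  have h2 : Tendsto (fun n : ℕ => (g (2 * n) ε : ℝ) / ((2 * n : ℕ) : ℝ)) atTop (nhds 0) :=
    (hg ε hε).comp hmono
  have h3 : ∀ᶠ n : ℕ in atTop, (g (2 * n) ε : ℝ) / ((2 * n : ℕ) : ℝ) < 1 / 2 :=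
    h2.eventually (gt_mem_nhds (by norm_num))
  filter_upwards [h3, eventually_ge_atTop 1] with n hn hn1
  have hgn : g (2 * n) ε < n := by
    have hpos : (0 : ℝ) < ((2 * n : ℕ) : ℝ) := by positivity
    have := (div_lt_iff₀ hpos).mp hn
    have : (g (2 * n) ε : ℝ) < n := by push_cast at this ⊢; linarith
    exact_mod_cast this
  rintro ⟨z, hz, h1, h2'⟩
  -- find an odd position j < 2n with z j = 2
  have hodd : ∃ m < n, z ((2 * m + 1 : ℕ) : ℤ) = 2 := by
    by_contra hc
    push_neg at hc
    have hle : n ≤ ((Finset.range (2 * n)).filter fun j : ℕ =>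
        z (j : ℤ) ≠ if Even j then (0 : Fin 3) else 2).card := by
      have hmem : ∀ i ∈ Finset.range n, 2 * i + 1 ∈ (Finset.range (2 * n)).filter
          fun j : ℕ => z (j : ℤ) ≠ if Even j then (0 : Fin 3) else 2 := by
        intro i hi
        simp only [Finset.mem_range] at hi
        simp only [Finset.mem_filter, Finset.mem_range]
        refine ⟨by omega, ?_⟩
        have hne : ¬ Even (2 * i + 1) := by simp [Nat.even_add_one, parity_simps]
        rw [if_neg hne]
        exact hc i hi
      have := Finset.card_le_card_of_injOn (fun i => 2 * i + 1) hmem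
        (fun a _ b _ h => by dsimp only at h; omega)
      rwa [Finset.card_range] at this
    omega
  -- find an even position 2n + 2m with z _ = 2
  have heven : ∃ m < n, z ((2 * n + 2 * m : ℕ) : ℤ) = 2 := by
    by_contra hc
    push_neg at hc
    have hle : n ≤ ((Finset.range (2 * n)).filter fun j : ℕ =>
        z ((2 * n + j : ℕ) : ℤ) ≠ if Even j then (2 : Fin 3) else 0).card := by
      have hmem : ∀ i ∈ Finset.range n, 2 * i ∈ (Finset.range (2 * n)).filter
          fun j : ℕ => z ((2 * n + j : ℕ) : ℤ) ≠ if Even j then (2 : Fin 3) else 0 := by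
        intro i hi
        simp only [Finset.mem_range] at hi
        simp only [Finset.mem_filter, Finset.mem_range]
        refine ⟨by omega, ?_⟩
        rw [if_pos (even_two_mul i)]
        exact hc i hi
      have := Finset.card_le_card_of_injOn (fun i => 2 * i) hmem
        (fun a _ b _ h => by dsimp only at h; omega)
      rwa [Finset.card_range] at this
    omega
  obtain ⟨m₁, hm₁, hz₁⟩ := hodd
  obtain ⟨m₂, hm₂, hz₂⟩ := heven
  rcases hz with hz | ⟨x, hx, rfl⟩
  · -- z ∈ E : even positions are never 2
    have := hz ((n : ℤ) + m₂)
    have heq : (2 : ℤ) * ((n : ℤ) + m₂) = ((2 * n + 2 * m₂ : ℕ) : ℤ) := by push_cast; ring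
    rw [heq] at this
    rw [hz₂] at this
    simp only [Set.mem_insert_iff, Set.mem_singleton_iff, Prod.mk.injEq] at this
    rcases this with ⟨h, -⟩ | ⟨h, -⟩ | ⟨h, -⟩ | ⟨h, -⟩ <;> exact absurd h (by decide)
  · -- z = shiftZ x : odd positions of z are even positions of x
    have := hx ((m₁ : ℤ) + 1)
    have heq : (2 : ℤ) * ((m₁ : ℤ) + 1) = ((2 * m₁ + 1 : ℕ) : ℤ) + 1 := by push_cast; ring
    rw [heq] at this
    have hz₁' : x (((2 * m₁ + 1 : ℕ) : ℤ) + 1) = 2 := hz₁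
    rw [hz₁'] at this
    simp only [Set.mem_insert_iff, Set.mem_singleton_iff, Prod.mk.injEq] at this
    rcases this with ⟨h, -⟩ | ⟨h, -⟩ | ⟨h, -⟩ | ⟨h, -⟩ <;> exact absurd h (by decide)
end

section
/- Let N, M ∈ ℕ⁺ with N dividing M, let τ := NM, and let B_0 ⊂ X be a compact set with f^τ(B_0) ⊂ B_0 and B_0 ∩ f^{Nl}(B_0) = ∅ for all 1 ≤ l ≤ M−1. Suppose q ∈ {1,…,τ−1} is not a multiple of N, write q = Na + r with 0 ≤ a ≤ M−1 and 1 ≤ r ≤ N−1, set d := gcd(N,r) and m_q := N/d. Then B_0 ∩ f^{m_q · q}(B_0) = ∅. -/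
/-- Let `N ∣ M`, `τ = N·M`, and `B₀` compact with `f^τ(B₀) ⊆ B₀` and
`B₀ ∩ f^{Nl}(B₀) = ∅` for `1 ≤ l ≤ M−1`. If `q ∈ {1,…,τ−1}` is not a multiple of `N`,
`q = Na + r` with `0 ≤ a ≤ M−1`, `1 ≤ r ≤ N−1`, `d = gcd(N,r)` and `m_q = N/d`, then
`B₀ ∩ f^{m_q·q}(B₀) = ∅`. -/
theorem pruning_multiplicity_bound
    {X : Type*} [MetricSpace X] [CompactSpace X]
    (f : X → X) (hf : Continuous f)
    (N M : ℕ) (hN : 0 < N) (hM : 0 < M) (hNM : N ∣ M)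
    (B₀ : Set X) (hB₀c : IsCompact B₀)
    (hinv : f^[N * M] '' B₀ ⊆ B₀)
    (hdisj : ∀ l : ℕ, 1 ≤ l → l ≤ M - 1 → B₀ ∩ f^[N * l] '' B₀ = ∅)
    (q : ℕ) (hq1 : 1 ≤ q) (hq2 : q ≤ N * M - 1) (hqN : ¬ N ∣ q)
    (a r : ℕ) (hq : q = N * a + r) (ha : a ≤ M - 1) (hr1 : 1 ≤ r) (hr2 : r ≤ N - 1) :
    B₀ ∩ f^[(N / Nat.gcd N r) * q] '' B₀ = ∅ := by
  set d := Nat.gcd N r with hd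
  obtain ⟨n', hn'⟩ : d ∣ N := Nat.gcd_dvd_left N r
  obtain ⟨r', hr'⟩ : d ∣ r := Nat.gcd_dvd_right N r
  have hdpos : 0 < d := Nat.gcd_pos_of_pos_left r hN
  have hNd : N / d = n' := by rw [hn', Nat.mul_div_cancel_left _ hdpos]
  -- m * q = N * k with k = n' * a + r'
  set k := n' * a + r' with hk
  have hmq : (N / d) * q = N * k := by
    rw [hNd, hq, hk, hn', hr']; ring
  have hn'pos : 0 < n' := by
    rcases Nat.eq_zero_or_pos n' with h | h
    · subst h; simp at hn'; omega
    · exact h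
  -- M does not divide k
  have hMk : ¬ M ∣ k := by
    rintro ⟨t, ht⟩
    apply hqN
    have hq' : n' * q = n' * (d * M * t) := by
      have : N * k = N * (M * t) := by rw [ht]
      rw [← hmq, hNd] at this
      calc n' * q = N * (M * t) := this
        _ = n' * (d * M * t) := by rw [hn']; ring
    have hq'' : q = d * M * t := Nat.eq_of_mul_eq_mul_left hn'pos hq'
    rw [hq'', mul_assoc]
    exact Dvd.dvd.mul_left (Dvd.dvd.mul_right hNM t) d
  -- forward invariance for multiples of N*M
  have hinvt : ∀ t : ℕ, f^[N * M * t] '' B₀ ⊆ B₀ := by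
    intro t
    induction t with
    | zero => simp
    | succ t ih =>
      have : N * M * (t + 1) = N * M * t + N * M := by ring
      rw [this, Function.iterate_add, Set.image_comp]
      exact (Set.image_mono hinv).trans ih
  -- reduce N*k mod N*M
  have hsub : f^[N * k] '' B₀ ⊆ f^[N * (k % M)] '' B₀ := by
    have hdecomp : N * k = N * (k % M) + N * M * (k / M) := by
      conv_lhs => rw [← Nat.mod_add_div k M]
      ring
    rw [hdecomp, Function.iterate_add, Set.image_comp]
    exact Set.image_mono (hinvt _)
  have hl1 : 1 ≤ k % M := by
    rcases Nat.eq_zero_or_pos (k % M) with h | h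
    · exact absurd (Nat.dvd_of_mod_eq_zero h) hMk
    · exact h
  have hl2 : k % M ≤ M - 1 := Nat.le_sub_one_of_lt (Nat.mod_lt _ hM)
  have := hdisj (k % M) hl1 hl2
  rw [hmq]
  apply Set.eq_empty_of_subset_empty
  calc B₀ ∩ f^[N * k] '' B₀ ⊆ B₀ ∩ f^[N * (k % M)] '' B₀ :=
        Set.inter_subset_inter_right _ hsub
    _ = ∅ := this
end
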